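/- arXiv:1905.11162 — 4 statements merged into one kernel-verified Lean document; each statement's English description precedes it below -/
import Mathlib

section
/- For a lower semicontinuous W : ℝ^N → [0,∞] satisfying (H1) and (H2), the geodesic pseudo-distance geod_W(x,y) := inf over continuous piecewise locally Lipschitz curves σ : [-1,1] → ℝ^N with σ(-1)=x, σ(1)=y of ∫_{-1}^{1} 2√(W(σ(t))) |σ'(t)| dt satisfies: for every δ > 0 there exists ε > 0 such that |x − y| ≥ δ implies geod_W(x,y) ≥ ε. In particular geod_W(x,y) > 0 whenever x ≠ y. -/
open MeasureTheory Metric Set Filter Topology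
open scoped ENNReal NNReal

/-- A curve `σ : [-1,1] → ℝ^N` is piecewise locally Lipschitz: there is a finite partition
`-1 = t₀ < t₁ < ⋯ < t_k = 1` such that `σ` is locally Lipschitz on each open subinterval. -/
def PiecewiseLocLip {N : ℕ} (σ : ℝ → EuclideanSpace ℝ (Fin N)) : Prop :=
  ∃ (k : ℕ) (t : Fin (k + 1) → ℝ), t 0 = -1 ∧ t (Fin.last k) = 1 ∧ StrictMono t ∧
    ∀ i : Fin k, ∀ x ∈ Set.Ioo (t i.castSucc) (t i.succ),
      ∃ (K : ℝ≥0) (s : Set ℝ), s ∈ nhdsWithin x (Set.Ioo (t i.castSucc) (t i.succ)) ∧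
        LipschitzOnWith K σ s

/-- Admissible curves from `x` to `y`: continuous on `[-1,1]`, piecewise locally Lipschitz,
with prescribed endpoints. -/
def AdmissibleCurve {N : ℕ} (x y : EuclideanSpace ℝ (Fin N))
    (σ : ℝ → EuclideanSpace ℝ (Fin N)) : Prop :=
  ContinuousOn σ (Set.Icc (-1) 1) ∧ σ (-1) = x ∧ σ 1 = y ∧ PiecewiseLocLip σ

/-- The weighted length `∫_{-1}^1 2 √(W(σ(t))) |σ'(t)| dt` of a curve. -/
noncomputable def curveCost {N : ℕ} (W : EuclideanSpace ℝ (Fin N) → ℝ≥0∞)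
    (σ : ℝ → EuclideanSpace ℝ (Fin N)) : ℝ≥0∞ :=
  ∫⁻ s in Set.Icc (-1 : ℝ) 1, 2 * (W (σ s)) ^ (1/2 : ℝ) * (‖deriv σ s‖₊ : ℝ≥0∞)

/-- The geodesic pseudo-distance associated to the degenerate metric `4 W g₀`. -/
noncomputable def geod {N : ℕ} (W : EuclideanSpace ℝ (Fin N) → ℝ≥0∞)
    (x y : EuclideanSpace ℝ (Fin N)) : ℝ≥0∞ :=
  ⨅ σ ∈ {σ : ℝ → EuclideanSpace ℝ (Fin N) | AdmissibleCurve x y σ}, curveCost W σ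

lemma slope_aux {E : Type*} [NormedAddCommGroup E] [NormedSpace ℝ E]
    {σ : ℝ → E} {x₀ : E} {u : ℝ}
    (hσ : DifferentiableAt ℝ σ u) (hF : DifferentiableAt ℝ (fun t => dist (σ t) x₀) u) :
    |deriv (fun t => dist (σ t) x₀) u| ≤ ‖deriv σ u‖ := by
  set F := fun t => dist (σ t) x₀ with hFdef
  have h1 : Tendsto (slope F u) (𝓝[≠] u) (𝓝 (deriv F u)) :=
    hasDerivAt_iff_tendsto_slope.1 hF.hasDerivAt
  have h2 : Tendsto (slope σ u) (𝓝[≠] u) (𝓝 (deriv σ u)) :=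
    hasDerivAt_iff_tendsto_slope.1 hσ.hasDerivAt
  have h1' : Tendsto (fun y => |slope F u y|) (𝓝[≠] u) (𝓝 |deriv F u|) :=
    (continuous_abs.tendsto _).comp h1
  have h2' : Tendsto (fun y => ‖slope σ u y‖) (𝓝[≠] u) (𝓝 ‖deriv σ u‖) :=
    (continuous_norm.tendsto _).comp h2
  refine le_of_tendsto_of_tendsto' h1' h2' (fun y => ?_)
  simp only [slope_def_module, smul_eq_mul, norm_smul, abs_mul, norm_inv, Real.norm_eq_abs]
  rw [abs_inv]
  apply mul_le_mul_of_nonneg_left _ (inv_nonneg.2 (abs_nonneg _))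
  calc |F y - F u| ≤ dist (σ y) (σ u) := abs_dist_sub_le _ _ _
    _ = ‖σ y - σ u‖ := dist_eq_norm _ _

lemma icc_diff_subset_range {k : ℕ} {t : Fin (k + 1) → ℝ}
    (ht0 : t 0 = -1) (htl : t (Fin.last k) = 1) (hmono : StrictMono t) :
    Icc (-1 : ℝ) 1 \ (⋃ i : Fin k, Ioo (t i.castSucc) (t i.succ)) ⊆ Set.range t := by
  rintro u ⟨⟨hu1, hu2⟩, hnot⟩
  by_contra hu
  simp only [Set.mem_range, not_exists] at hu
  have hS : (Finset.univ.filter (fun i : Fin (k+1) => t i ≤ u)).Nonempty :=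
    ⟨0, by simp [ht0, hu1]⟩
  set S := Finset.univ.filter (fun i : Fin (k+1) => t i ≤ u) with hSdef
  set i₀ := S.max' hS with hi₀
  have hi₀mem : i₀ ∈ S := S.max'_mem hS
  have hti₀ : t i₀ ≤ u := (Finset.mem_filter.1 hi₀mem).2
  have hlt : t i₀ < u := lt_of_le_of_ne hti₀ (hu i₀)
  have hne : i₀ ≠ Fin.last k := by
    intro h
    rw [h, htl] at hlt
    exact absurd hu2 (not_le.2 hlt)
  obtain ⟨j, hj⟩ := Fin.exists_castSucc_eq.mpr hne
  have hsucc : u < t j.succ := by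
    by_contra h
    push_neg at h
    have : j.succ ∈ S := Finset.mem_filter.2 ⟨Finset.mem_univ _, h⟩
    have := S.le_max' _ this
    rw [← hi₀, ← hj] at this
    exact absurd (j.castSucc_lt_succ) (not_lt.2 this)
  exact hnot (Set.mem_iUnion.2 ⟨j, ⟨by rw [hj]; exact hlt, hsucc⟩⟩)

/-- Null image of non-differentiability points under F on an open set where σ is Lipschitz. -/
lemma lip_null_image {N : ℕ} {σ : ℝ → EuclideanSpace ℝ (Fin N)} {x₀ : EuclideanSpace ℝ (Fin N)}
    {U : Set ℝ} (hU : IsOpen U) {K : ℝ≥0} (hσ : LipschitzOnWith K σ U) :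
    volume ((fun t => dist (σ t) x₀) ''
      (U \ ({u | DifferentiableAt ℝ σ u} ∩
        {u | DifferentiableAt ℝ (fun t => dist (σ t) x₀) u}))) = 0 := by
  set F := fun t => dist (σ t) x₀ with hFdef
  have hFlip : LipschitzOnWith K F U := by
    have : LipschitzWith 1 (fun z : EuclideanSpace ℝ (Fin N) => dist z x₀) := by
      simpa [dist_comm] using LipschitzWith.dist_right x₀
    simpa [hFdef, Function.comp_def] using (this.comp_lipschitzOnWith hσ)
  -- the set of non-differentiability points is null
  have hnull : volume (U \ ({u | DifferentiableAt ℝ σ u} ∩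
      {u | DifferentiableAt ℝ F u})) = 0 := by
    have h1 := hσ.ae_differentiableWithinAt_of_mem_real
    have h2 := hFlip.ae_differentiableWithinAt_of_mem_real
    rw [measure_eq_zero_iff_ae_notMem]
    filter_upwards [h1, h2] with u hu1 hu2
    rintro ⟨huU, hnd⟩
    exact hnd ⟨(hu1 huU).differentiableAt (hU.mem_nhds huU),
      (hu2 huU).differentiableAt (hU.mem_nhds huU)⟩
  -- Lipschitz image of a null set is null
  have hm := hFlip.mono (Set.diff_subset (t := ({u | DifferentiableAt ℝ σ u} ∩
        {u | DifferentiableAt ℝ F u})))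
  have him := hm.hausdorffMeasure_image_le (d := 1) (by norm_num)
  rw [← MeasureTheory.hausdorffMeasure_real]
  refine le_antisymm (him.trans ?_) (by positivity)
  rw [MeasureTheory.hausdorffMeasure_real, hnull, mul_zero]

lemma crossing {N : ℕ} {σ : ℝ → EuclideanSpace ℝ (Fin N)}
    (hc : ContinuousOn σ (Set.Icc (-1) 1)) (hp : PiecewiseLocLip σ)
    (x₀ : EuclideanSpace ℝ (Fin N)) {s1 s2 : ℝ}
    (h1 : dist (σ (-1)) x₀ ≤ s1) (h12 : s1 ≤ s2) (h2 : s2 ≤ dist (σ 1) x₀) :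
    ∃ A : Set ℝ, A ⊆ Set.Icc (-1) 1 ∧ MeasurableSet A ∧
      (∀ u ∈ A, dist (σ u) x₀ ∈ Set.Icc s1 s2) ∧
      ENNReal.ofReal (s2 - s1) ≤ ∫⁻ u in A, (‖deriv σ u‖₊ : ℝ≥0∞) := by
  classical
  set F := fun u => dist (σ u) x₀ with hFdef
  have hFc : ContinuousOn F (Set.Icc (-1) 1) := (continuous_id.dist continuous_const).comp_continuousOn hc
  obtain ⟨k, t, ht0, htl, hmono, hlip⟩ := hp
  set P : Set ℝ := ⋃ i : Fin k, Ioo (t i.castSucc) (t i.succ) with hPdef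
  have hPopen : IsOpen P := isOpen_iUnion fun i => isOpen_Ioo
  set D : Set ℝ := {u | DifferentiableAt ℝ σ u} ∩ {u | DifferentiableAt ℝ F u} with hDdef
  have hDmeas : MeasurableSet D :=
    (measurableSet_of_differentiableAt ℝ σ).inter (measurableSet_of_differentiableAt ℝ F)
  set B : Set ℝ := Icc (-1) 1 ∩ F ⁻¹' (Icc s1 s2) with hBdef
  have hBclosed : IsClosed B := hFc.preimage_isClosed_of_isClosed isClosed_Icc isClosed_Icc
  set A : Set ℝ := B ∩ P ∩ D with hAdef
  have hAmeas : MeasurableSet A :=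
    ((hBclosed.measurableSet.inter hPopen.measurableSet).inter hDmeas)
  have hAsub : A ⊆ Icc (-1) 1 := fun u hu => hu.1.1.1
  refine ⟨A, hAsub, hAmeas, fun u hu => hu.1.1.2, ?_⟩
  -- [s1, s2] ⊆ F '' B
  have himB : Icc s1 s2 ⊆ F '' B := by
    intro v hv
    have hv' : v ∈ Icc (F (-1)) (F 1) := ⟨h1.trans hv.1, hv.2.trans h2⟩
    obtain ⟨u, hu, huv⟩ := intermediate_value_Icc (by norm_num : (-1:ℝ) ≤ 1) hFc hv'
    exact ⟨u, ⟨hu, by rw [Set.mem_preimage, huv]; exact hv⟩, huv⟩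
  -- per-point Lipschitz neighborhoods inside the pieces
  have hUx : ∀ u ∈ P, ∃ U : Set ℝ, IsOpen U ∧ u ∈ U ∧ ∃ K : ℝ≥0, LipschitzOnWith K σ U := by
    intro u hu
    obtain ⟨i, hui⟩ := Set.mem_iUnion.1 hu
    obtain ⟨K, s, hs, hKs⟩ := hlip i u hui
    rw [nhdsWithin_eq_nhds.2 (isOpen_Ioo.mem_nhds hui)] at hs
    obtain ⟨U, hUs, hUopen, hUu⟩ := _root_.mem_nhds_iff.1 hs
    exact ⟨U, hUopen, hUu, K, hKs.mono hUs⟩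
  -- F '' (B \ A) is null
  have hnullBA : volume (F '' (B \ A)) = 0 := by
    have hsplit : B \ A ⊆ (Icc (-1) 1 \ P) ∪ (P \ D) := by
      rintro u ⟨huB, huA⟩
      by_cases huP : u ∈ P
      · right
        refine ⟨huP, fun huD => huA ⟨⟨huB, huP⟩, huD⟩⟩
      · exact Or.inl ⟨huB.1, huP⟩
    have h1' : volume (F '' (Icc (-1) 1 \ P)) = 0 := by
      apply Set.Countable.measure_zero
      exact (((Set.countable_range t).mono
        (icc_diff_subset_range ht0 htl hmono)).image F)
    have h2' : volume (F '' (P \ D)) = 0 := by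
      -- countable cover of P by Lipschitz neighborhoods
      have hf : ∀ u ∈ P, (if h : u ∈ P then (hUx u h).choose else ∅) ∈ 𝓝[P] u := by
        intro u huP
        rw [dif_pos huP]
        obtain ⟨hUopen, hUu, K, hK⟩ := (hUx u huP).choose_spec
        exact mem_nhdsWithin_of_mem_nhds (hUopen.mem_nhds hUu)
      obtain ⟨T, hTsub, hTcount, hTcover⟩ := TopologicalSpace.countable_cover_nhdsWithin hf
      have hcov : P \ D ⊆ ⋃ u ∈ T, ((if h : u ∈ P then (hUx u h).choose else ∅) \ D) := by
          rintro v ⟨hvP, hvD⟩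
          obtain ⟨u, huT, hvU⟩ := Set.mem_iUnion₂.1 (hTcover hvP)
          exact Set.mem_iUnion₂.2 ⟨u, huT, hvU, hvD⟩
      refine measure_mono_null (Set.image_mono (f := F) hcov) ?_
      rw [Set.image_iUnion₂]
      refine (measure_biUnion_null_iff hTcount).2 fun u huT => ?_
      have huP : u ∈ P := hTsub huT
      rw [dif_pos huP]
      obtain ⟨hUopen, hUu, K, hK⟩ := (hUx u huP).choose_spec
      exact lip_null_image hUopen hK
    refine measure_mono_null (Set.image_mono (f := F) hsplit) ?_
    rw [Set.image_union]
    exact measure_union_null h1' h2'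
  -- volume (F '' A) ≤ ∫⁻ over A of ‖deriv F‖
  have hjac : volume (F '' A) ≤ ∫⁻ u in A, (‖deriv F u‖₊ : ℝ≥0∞) := by
    have := addHaar_image_le_lintegral_abs_det_fderiv (volume : Measure ℝ) hAmeas
      (f := F) (f' := fun u => fderiv ℝ F u)
      (fun u hu => (hu.2.2.hasFDerivAt).hasFDerivWithinAt)
    refine this.trans (le_of_eq ?_)
    apply setLIntegral_congr_fun hAmeas
    intro u hu
    show ENNReal.ofReal |(fderiv ℝ F u).det| = (‖deriv F u‖₊ : ℝ≥0∞)
    have hdF : fderiv ℝ F u = ContinuousLinearMap.smulRight (1 : ℝ →L[ℝ] ℝ) (deriv F u) :=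
      hu.2.2.hasDerivAt.hasFDerivAt.fderiv
    rw [hdF, ContinuousLinearMap.det_smulRight, ContinuousLinearMap.one_apply, one_mul,
      ← Real.enorm_eq_ofReal_abs, enorm_eq_nnnorm]
  -- pointwise |F'| ≤ ‖σ'‖ on A
  have hptwise : ∫⁻ u in A, (‖deriv F u‖₊ : ℝ≥0∞) ≤ ∫⁻ u in A, (‖deriv σ u‖₊ : ℝ≥0∞) := by
    apply lintegral_mono_ae
    rw [ae_restrict_iff' hAmeas]
    filter_upwards with u hu
    have := slope_aux hu.2.1 hu.2.2
    simp only [ENNReal.coe_le_coe]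
    rw [← NNReal.coe_le_coe]
    simpa [Real.norm_eq_abs] using this
  calc ENNReal.ofReal (s2 - s1) = volume (Icc s1 s2) := (Real.volume_Icc).symm
    _ ≤ volume (F '' B) := measure_mono himB
    _ ≤ volume (F '' A ∪ F '' (B \ A)) := by
        apply measure_mono
        rw [← Set.image_union]
        apply Set.image_mono
        intro u hu
        by_cases h : u ∈ A
        · exact Or.inl h
        · exact Or.inr ⟨hu, h⟩
    _ ≤ volume (F '' A) + volume (F '' (B \ A)) := measure_union_le _ _
    _ = volume (F '' A) := by rw [hnullBA, add_zero]
    _ ≤ _ := hjac.trans hptwise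

lemma lsc_pos_lb {N : ℕ} (W : EuclideanSpace ℝ (Fin N) → ℝ≥0∞)
    (hlsc : LowerSemicontinuous W)
    (hH2 : ∃ c : ℝ≥0∞, 0 < c ∧ ∃ R : ℝ, ∀ z : EuclideanSpace ℝ (Fin N), R ≤ ‖z‖ → c ≤ W z)
    {r : ℝ} (hr : 0 < r) :
    ∃ c₀ : ℝ≥0∞, 0 < c₀ ∧ c₀ ≠ ∞ ∧
      ∀ w, (∀ z, W z = 0 → r ≤ dist w z) → c₀ ≤ W w := by
  classical
  obtain ⟨c, hc, R, hR⟩ := hH2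
  set K : Set (EuclideanSpace ℝ (Fin N)) :=
    closedBall 0 (|R|+1) ∩ ⋂ z ∈ {z | W z = 0}, {w | r ≤ dist w z} with hKdef
  have hKcomp : IsCompact K := by
    apply (isCompact_closedBall _ _).inter_right
    apply isClosed_biInter
    intro z _
    exact isClosed_le continuous_const (continuous_id.dist continuous_const)
  have hKpos : ∀ w ∈ K, 0 < W w := by
    intro w hw
    rcases eq_or_ne (W w) 0 with h | h
    · exfalso
      have := (Set.mem_iInter₂.1 hw.2) w h
      simp only [Set.mem_setOf_eq, dist_self] at this
      linarith
    · exact pos_iff_ne_zero.2 h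
  -- choose values and neighborhoods
  have hchoice : ∀ w (hw : w ∈ K), ∃ b : ℝ≥0∞, 0 < b ∧ b < W w := fun w hw =>
    exists_between (hKpos w hw)
  have hnbhd : ∀ w (hw : w ∈ K), ∃ V : Set (EuclideanSpace ℝ (Fin N)),
      (∀ v ∈ V, (hchoice w hw).choose < W v) ∧ IsOpen V ∧ w ∈ V := by
    intro w hw
    have := hlsc w _ (hchoice w hw).choose_spec.2
    exact eventually_nhds_iff.1 this
  obtain ⟨t, ht⟩ := hKcomp.elim_nhds_subcover'
    (fun w hw => (hnbhd w hw).choose)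
    (fun w hw => ((hnbhd w hw).choose_spec.2.1).mem_nhds (hnbhd w hw).choose_spec.2.2)
  set c₁ : ℝ≥0∞ := t.inf (fun x => (hchoice x.1 x.2).choose) with hc₁def
  have hc₁pos : 0 < c₁ := by
    rw [hc₁def, Finset.lt_inf_iff]
    · exact fun x _ => (hchoice x.1 x.2).choose_spec.1
    · exact ENNReal.zero_lt_top
  have hKlb : ∀ w ∈ K, c₁ ≤ W w := by
    intro w hw
    obtain ⟨x, hx, hwx⟩ := Set.mem_iUnion₂.1 (ht hw)
    exact le_trans (Finset.inf_le hx) ((hnbhd x.1 x.2).choose_spec.1 w hwx).le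
  refine ⟨min (min c c₁) 1, ?_, ?_, ?_⟩
  · simp only [lt_min_iff]
    exact ⟨⟨hc, hc₁pos⟩, zero_lt_one⟩
  · exact ne_top_of_le_ne_top ENNReal.one_ne_top (min_le_right _ _)
  · intro w hw
    rcases le_total ‖w‖ (|R|+1) with h | h
    · have hwK : w ∈ K := by
        refine ⟨mem_closedBall_zero_iff.2 h, Set.mem_iInter₂.2 fun z hz => hw z hz⟩
      exact le_trans (le_trans (min_le_left _ _) (min_le_right _ _)) (hKlb w hwK)
    · have : R ≤ ‖w‖ := le_trans (le_trans (le_abs_self R) (by linarith)) h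
      exact le_trans (le_trans (min_le_left _ _) (min_le_left _ _)) (hR w this)

lemma pigeon {E : Type*} [MetricSpace E] (Z : Finset E) (x : E) {r : ℝ} (hr : 0 < r) :
    ∃ j : Fin (Z.card + 1), ∀ z ∈ Z, 2*r ≤ |(4*((j:ℕ):ℝ)+2)*r - dist x z| := by
  by_contra h
  push_neg at h
  choose g hg1 hg2 using h
  have ginj : Function.Injective g := by
    intro j j' hjj
    by_contra hne
    have hne' : ((j:ℕ):ℝ) ≠ ((j':ℕ):ℝ) := by
      exact_mod_cast fun hh => hne (Fin.ext hh)
    have hnat : (j:ℕ) ≠ (j':ℕ) := fun hh => hne (Fin.ext hh)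
    have habs : (1:ℝ) ≤ |((j:ℕ):ℝ) - ((j':ℕ):ℝ)| := by
      rcases Nat.lt_or_gt_of_ne hnat with hlt | hlt
      · have h1 : ((j:ℕ):ℝ) + 1 ≤ ((j':ℕ):ℝ) := by exact_mod_cast Nat.succ_le_of_lt hlt
        rw [abs_sub_comm, abs_of_nonneg (by linarith)]
        linarith
      · have h1 : ((j':ℕ):ℝ) + 1 ≤ ((j:ℕ):ℝ) := by exact_mod_cast Nat.succ_le_of_lt hlt
        rw [abs_of_nonneg (by linarith)]
        linarith
    have h1 := hg2 j
    have h2 := hg2 j'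
    rw [hjj] at h1
    set d := dist x (g j')
    have htri : |(4*((j:ℕ):ℝ)+2)*r - (4*((j':ℕ):ℝ)+2)*r| ≤
        |(4*((j:ℕ):ℝ)+2)*r - d| + |d - (4*((j':ℕ):ℝ)+2)*r| := abs_sub_le _ _ _
    rw [abs_sub_comm d] at htri
    have heq : (4*((j:ℕ):ℝ)+2)*r - (4*((j':ℕ):ℝ)+2)*r = 4*r*(((j:ℕ):ℝ) - ((j':ℕ):ℝ)) := by ring
    rw [heq, abs_mul, abs_of_pos (by linarith : (0:ℝ) < 4*r)] at htri
    nlinarith [abs_nonneg (((j:ℕ):ℝ) - ((j':ℕ):ℝ))]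
  have := Finset.card_le_card_of_injOn (s := Finset.univ) g (fun j _ => hg1 j) ginj.injOn
  simp only [Finset.card_univ, Fintype.card_fin] at this
  omega

/-- For lower semicontinuous `W` satisfying (H1) and (H2): for every `δ > 0`
there exists `ε > 0` such that `|x - y| ≥ δ` implies `geod_W(x,y) ≥ ε`; in particular
`geod_W(x,y) > 0` whenever `x ≠ y`. -/
theorem geod_nondegenerate {N : ℕ} (W : EuclideanSpace ℝ (Fin N) → ℝ≥0∞)
    (hlsc : LowerSemicontinuous W)
    (hH1 : {z : EuclideanSpace ℝ (Fin N) | W z = 0}.Finite)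
    (hH2 : ∃ c : ℝ≥0∞, 0 < c ∧ ∃ R : ℝ, ∀ z : EuclideanSpace ℝ (Fin N), R ≤ ‖z‖ → c ≤ W z) :
    (∀ δ : ℝ, 0 < δ → ∃ ε : ℝ≥0∞, 0 < ε ∧
      ∀ x y : EuclideanSpace ℝ (Fin N), δ ≤ dist x y → ε ≤ geod W x y) ∧
    ∀ x y : EuclideanSpace ℝ (Fin N), x ≠ y → 0 < geod W x y := by
  classical
  have main : ∀ δ : ℝ, 0 < δ → ∃ ε : ℝ≥0∞, 0 < ε ∧
      ∀ x y : EuclideanSpace ℝ (Fin N), δ ≤ dist x y → ε ≤ geod W x y := by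
    intro δ hδ
    set Z : Finset (EuclideanSpace ℝ (Fin N)) := hH1.toFinset with hZdef
    set m : ℕ := Z.card with hmdef
    set r : ℝ := δ / (4*(m+1)) with hrdef
    have hm1 : (0:ℝ) < 4*((m:ℝ)+1) := by positivity
    have hr : 0 < r := by
      rw [hrdef]
      push_cast
      positivity
    have hδr : δ = 4*((m:ℝ)+1)*r := by
      rw [hrdef]
      push_cast
      field_simp
    obtain ⟨c₀, hc₀pos, hc₀top, hc₀⟩ := lsc_pos_lb W hlsc hH2 hr
    refine ⟨2 * c₀ ^ (1/2:ℝ) * ENNReal.ofReal (2*r), ?_, ?_⟩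
    · apply ENNReal.mul_pos
      · exact mul_ne_zero (by simp) (ENNReal.rpow_pos hc₀pos hc₀top).ne'
      · exact (ENNReal.ofReal_pos.2 (by linarith)).ne'
    · intro x y hxy
      rw [geod]
      refine le_iInf₂ fun σ hσ => ?_
      obtain ⟨hcont, hx0, hy0, hpl⟩ := hσ
      obtain ⟨j, hj⟩ := pigeon Z x hr
      set sj : ℝ := (4*((j:ℕ):ℝ)+2)*r with hsjdef
      have hjm : ((j:ℕ):ℝ) ≤ (m:ℝ) := by
        have : (j:ℕ) ≤ m := Nat.lt_succ_iff.1 j.2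
        exact_mod_cast this
      have h1 : dist (σ (-1)) x ≤ sj - r := by
        rw [hx0, dist_self, hsjdef]
        nlinarith
      have h12 : sj - r ≤ sj + r := by linarith
      have h2 : sj + r ≤ dist (σ 1) x := by
        rw [hy0, dist_comm]
        have : sj + r ≤ δ := by
          rw [hδr, hsjdef]
          nlinarith
        linarith
      obtain ⟨A, hAsub, hAmeas, hAprop, hAint⟩ := crossing hcont hpl x h1 h12 h2
      have hWA : ∀ u ∈ A, c₀ ≤ W (σ u) := by
        intro u hu
        apply hc₀
        intro z hz
        have hzZ : z ∈ Z := hH1.mem_toFinset.2 hz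
        have h2r := hj z hzZ
        obtain ⟨hl, hr'⟩ := hAprop u hu
        have habs1 : |sj - dist (σ u) x| ≤ r := abs_le.2 ⟨by linarith, by linarith⟩
        have htri : |sj - dist x z| ≤ |sj - dist (σ u) x| + |dist (σ u) x - dist x z| :=
          abs_sub_le _ _ _
        have htri2 : |dist (σ u) x - dist z x| ≤ dist (σ u) z := abs_dist_sub_le _ _ _
        rw [dist_comm z x] at htri2
        have : r ≤ |dist (σ u) x - dist x z| := by linarith
        linarith [abs_nonneg (dist (σ u) x - dist x z), this.trans htri2]
      have hs2s1 : sj + r - (sj - r) = 2*r := by ring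
      rw [hs2s1] at hAint
      have hconst_ne : 2 * c₀ ^ (1/2:ℝ) ≠ ∞ :=
        ENNReal.mul_ne_top (by simp) (ENNReal.rpow_ne_top_of_nonneg (by norm_num) hc₀top)
      calc 2 * c₀ ^ (1/2:ℝ) * ENNReal.ofReal (2*r)
          ≤ 2 * c₀ ^ (1/2:ℝ) * ∫⁻ u in A, (‖deriv σ u‖₊ : ℝ≥0∞) :=
            by gcongr
        _ = ∫⁻ u in A, 2 * c₀ ^ (1/2:ℝ) * (‖deriv σ u‖₊ : ℝ≥0∞) :=
            (lintegral_const_mul' _ _ hconst_ne).symm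
        _ ≤ ∫⁻ u in A, 2 * (W (σ u)) ^ (1/2:ℝ) * (‖deriv σ u‖₊ : ℝ≥0∞) := by
            apply lintegral_mono_ae
            rw [ae_restrict_iff' hAmeas]
            filter_upwards with u hu
            have : c₀ ^ (1/2:ℝ) ≤ (W (σ u)) ^ (1/2:ℝ) :=
              ENNReal.rpow_le_rpow (hWA u hu) (by norm_num)
            gcongr
        _ ≤ ∫⁻ u in Set.Icc (-1:ℝ) 1,
              2 * (W (σ u)) ^ (1/2:ℝ) * (‖deriv σ u‖₊ : ℝ≥0∞) :=
            lintegral_mono_set hAsub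
        _ = curveCost W σ := rfl
  refine ⟨main, fun x y hxy => ?_⟩
  obtain ⟨ε, hε, h⟩ := main (dist x y) (dist_pos.2 hxy)
  exact lt_of_lt_of_le hε (h x y le_rfl)
end

section
/- Let W : ℝ^N → [0,∞] be lower semicontinuous. For every open interval I ⊂ ℝ and every σ ∈ H^1_loc(I, ℝ^N) with ∫_I |σ'|² < ∞ which admits limits σ(inf I) and σ(sup I) at the endpoints, the energy E_W(σ,I) = ∫_I (|σ'(t)|² + W(σ(t))) dt is at least geod_W(σ(inf I), σ(sup I)). -/
open MeasureTheory Metric Set Filter Topology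
open scoped ENNReal NNReal

lemma aux_amgm (r x : ℝ≥0) : 2 * (r : ℝ≥0∞) * (x : ℝ≥0∞) ≤ (x:ℝ≥0∞)^2 + (r:ℝ≥0∞)^2 := by
  have h : (2 * r * x : ℝ≥0) ≤ (x^2 + r^2 : ℝ≥0) := by
    rw [← NNReal.coe_le_coe]; push_cast; nlinarith [sq_nonneg ((x:ℝ) - (r:ℝ))]
  calc (2 * (r:ℝ≥0∞) * x) = ((2 * r * x : ℝ≥0) : ℝ≥0∞) := by push_cast; ring
    _ ≤ ((x^2 + r^2 : ℝ≥0) : ℝ≥0∞) := ENNReal.coe_le_coe.2 h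
    _ = (x:ℝ≥0∞)^2 + (r:ℝ≥0∞)^2 := by push_cast; ring

lemma aux_le_one_add_sq (x : ℝ≥0∞) : x ≤ 1 + x^2 := by
  rcases le_total x 1 with h | h
  · exact h.trans le_self_add
  · calc x = x * 1 := (mul_one x).symm
      _ ≤ x * x := by gcongr
      _ ≤ 1 + x^2 := by rw [← sq]; exact le_add_self

set_option maxHeartbeats 1000000 in
/-- For lower semicontinuous `W : ℝ^N → [0,∞]`, an open interval `I = (a,b)`
and `σ ∈ H¹_loc(I, ℝ^N)` (encoded by its a.e. derivative `g` via the fundamental theorem of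
calculus) with `∫_I |σ'|² < ∞` which admits limits `p_a`, `p_b` at the endpoints, the energy
`E_W(σ, I) = ∫_I (|σ'|² + W(σ))` is at least `geod_W(p_a, p_b)`. -/
theorem energy_ge_geod {N : ℕ} (W : EuclideanSpace ℝ (Fin N) → ℝ≥0∞)
    (hlsc : LowerSemicontinuous W) (a b : ℝ) (hab : a < b)
    (σ g : ℝ → EuclideanSpace ℝ (Fin N)) (hg : Measurable g)
    (hFTC : ∀ s ∈ Set.Ioo a b, ∀ t ∈ Set.Ioo a b, σ t - σ s = ∫ r in s..t, g r)
    (hg2 : (∫⁻ t in Set.Ioo a b, (‖g t‖₊ : ℝ≥0∞) ^ 2) < ⊤)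
    (pa pb : EuclideanSpace ℝ (Fin N))
    (hpa : Tendsto σ (nhdsWithin a (Set.Ioo a b)) (nhds pa))
    (hpb : Tendsto σ (nhdsWithin b (Set.Ioo a b)) (nhds pb)) :
    geod W pa pb ≤ ∫⁻ t in Set.Ioo a b, ((‖g t‖₊ : ℝ≥0∞) ^ 2 + W (σ t)) := by
  by_cases hT : (∫⁻ t in Set.Ioo a b, ((‖g t‖₊ : ℝ≥0∞) ^ 2 + W (σ t))) = ⊤
  · rw [hT]; exact le_top
  -- the auxiliary weight
  set h : ℝ → ℝ := (Set.Ioo a b).indicator (fun t => ‖g t‖) with hh_def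
  have hh_nonneg : ∀ t, 0 ≤ h t := fun t =>
    Set.indicator_nonneg (fun t _ => norm_nonneg _) t
  have hh_meas : Measurable h := (hg.norm).indicator measurableSet_Ioo
  have hg1 : (∫⁻ t in Set.Ioo a b, (‖g t‖₊ : ℝ≥0∞)) < ⊤ := by
    calc (∫⁻ t in Set.Ioo a b, (‖g t‖₊ : ℝ≥0∞))
        ≤ ∫⁻ t in Set.Ioo a b, (1 + (‖g t‖₊ : ℝ≥0∞)^2) :=
          lintegral_mono fun t => aux_le_one_add_sq _
      _ = (volume (Set.Ioo a b)) + ∫⁻ t in Set.Ioo a b, (‖g t‖₊ : ℝ≥0∞)^2 := by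
          rw [lintegral_add_left measurable_const, lintegral_const,
            Measure.restrict_apply MeasurableSet.univ, Set.univ_inter, one_mul]
      _ < ⊤ := by
          rw [Real.volume_Ioo]
          exact ENNReal.add_lt_top.2 ⟨ENNReal.ofReal_lt_top, hg2⟩
  have hh_int : Integrable h := by
    refine ⟨hh_meas.aestronglyMeasurable, ?_⟩
    show (∫⁻ t, (‖h t‖₊ : ℝ≥0∞)) < ⊤
    calc ∫⁻ t, (‖h t‖₊ : ℝ≥0∞) = ∫⁻ t in Set.Ioo a b, (‖g t‖₊ : ℝ≥0∞) := by
          rw [← lintegral_indicator measurableSet_Ioo]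
          congr 1; funext t
          by_cases ht : t ∈ Set.Ioo a b <;>
            simp [hh_def, ht, Set.indicator_of_mem, Set.indicator_of_notMem,
              nnnorm_norm]
      _ < ⊤ := hg1
  -- the reparametrizing map M and its inverse φ
  set M : ℝ → ℝ := fun t => (t - a) + ∫ r in a..t, h r with hM_def
  have hM_sub : ∀ s t : ℝ, M t - M s = (t - s) + ∫ r in s..t, h r := by
    intro s t
    have := intervalIntegral.integral_interval_sub_left
      (hh_int.intervalIntegrable (a := a) (b := t)) (hh_int.intervalIntegrable (a := a) (b := s))
    simp only [hM_def]
    rw [← this]; ring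
  have hint_nonneg : ∀ s t : ℝ, s ≤ t → 0 ≤ ∫ r in s..t, h r := fun s t hst =>
    intervalIntegral.integral_nonneg hst (fun r _ => hh_nonneg r)
  have hM_gap : ∀ s t : ℝ, s ≤ t → t - s ≤ M t - M s := by
    intro s t hst
    rw [hM_sub]
    linarith [hint_nonneg s t hst]
  have hM_strict : StrictMono M := by
    intro s t hst
    have := hM_gap s t hst.le
    linarith
  have hM_cont : Continuous M := by
    apply (continuous_id.sub continuous_const).add
    exact hh_int.continuous_primitive a
  have hM_bd : ∀ t : ℝ, |∫ r in a..t, h r| ≤ ∫ r, h r := by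
    intro t
    rcases le_total a t with hat | hat
    · rw [abs_of_nonneg (hint_nonneg a t hat), intervalIntegral.integral_of_le hat]
      exact setIntegral_le_integral hh_int (ae_of_all _ hh_nonneg)
    · rw [intervalIntegral.integral_symm, abs_neg, abs_of_nonneg (hint_nonneg t a hat),
        intervalIntegral.integral_of_le hat]
      exact setIntegral_le_integral hh_int (ae_of_all _ hh_nonneg)
  have hM_top : Tendsto M atTop atTop := by
    apply tendsto_atTop_mono (f := fun t => t - a - ∫ r, h r) _ _
    · intro t
      have := (abs_le.1 (hM_bd t)).1
      simp only [hM_def]; linarith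
    · exact tendsto_atTop_add_const_right _ _ (tendsto_atTop_add_const_right _ _ tendsto_id)
  have hM_bot : Tendsto M atBot atBot := by
    apply tendsto_atBot_mono (f := fun t => t - a + ∫ r, h r) _ _
    · intro t
      have := (abs_le.1 (hM_bd t)).2
      simp only [hM_def]; linarith
    · exact tendsto_atBot_add_const_right _ _ (tendsto_atBot_add_const_right _ _ tendsto_id)
  have hM_surj : Function.Surjective M := hM_cont.surjective hM_top hM_bot
  set φ : ℝ → ℝ := fun u => (StrictMono.orderIsoOfSurjective M hM_strict hM_surj).symm u
    with hφ_def
  have hφM : ∀ t, φ (M t) = t := fun t =>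
    StrictMono.orderIsoOfSurjective_symm_apply_self M hM_strict hM_surj t
  have hMφ : ∀ u, M (φ u) = u := by
    intro u
    exact (StrictMono.orderIsoOfSurjective M hM_strict hM_surj).apply_symm_apply u
  have hφ_mono : StrictMono φ :=
    (StrictMono.orderIsoOfSurjective M hM_strict hM_surj).symm.strictMono
  have hφ_cont : Continuous φ :=
    (StrictMono.orderIsoOfSurjective M hM_strict hM_surj).symm.continuous
  have hMa : M a = 0 := by simp [hM_def]
  set L : ℝ := M b with hL_def
  have hL_pos : 0 < L := by
    rw [hL_def, ← hMa]; exact hM_strict hab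
  have hφ0 : φ 0 = a := by rw [← hMa, hφM]
  have hφL : φ L = b := by rw [hL_def, hφM]
  clear_value L
  have hφmem : ∀ u, 0 < u → u < L → φ u ∈ Set.Ioo a b := by
    intro u h0 h1
    constructor
    · rw [← hφ0]; exact hφ_mono h0
    · rw [← hφL]; exact hφ_mono h1
  -- basic estimates on σ
  have hσ_sub : ∀ s ∈ Set.Ioo a b, ∀ t ∈ Set.Ioo a b, s ≤ t →
      (‖σ t - σ s‖₊ : ℝ≥0∞) ≤ ∫⁻ r in Set.Ioo s t, (‖g r‖₊ : ℝ≥0∞) := by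
    intro s hs t ht hst
    rw [hFTC s hs t ht, intervalIntegral.integral_of_le hst,
      ← Measure.restrict_congr_set Ioo_ae_eq_Ioc]
    exact enorm_integral_le_lintegral_enorm _
  have hg_h : ∀ s ∈ Set.Ioo a b, ∀ t ∈ Set.Ioo a b, s ≤ t →
      (∫⁻ r in Set.Ioo s t, (‖g r‖₊ : ℝ≥0∞)) ≤ ENNReal.ofReal (∫ r in s..t, h r) := by
    intro s hs t ht hst
    rw [intervalIntegral.integral_of_le hst,
      MeasureTheory.ofReal_integral_eq_lintegral_ofReal (hh_int.restrict)
        (ae_of_all _ hh_nonneg), ← Measure.restrict_congr_set Ioo_ae_eq_Ioc]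
    apply lintegral_mono_ae
    filter_upwards [ae_restrict_mem measurableSet_Ioo] with r hr
    have hrab : r ∈ Set.Ioo a b :=
      ⟨hs.1.trans hr.1, hr.2.trans ht.2⟩
    rw [hh_def, Set.indicator_of_mem hrab, ofReal_norm, enorm_eq_nnnorm]
  have hσM : ∀ s ∈ Set.Ioo a b, ∀ t ∈ Set.Ioo a b, s ≤ t → ‖σ t - σ s‖ ≤ M t - M s := by
    intro s hs t ht hst
    have h1 : (‖σ t - σ s‖₊ : ℝ≥0∞) ≤ ENNReal.ofReal (M t - M s) := by
      refine ((hσ_sub s hs t ht hst).trans (hg_h s hs t ht hst)).trans ?_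
      apply ENNReal.ofReal_le_ofReal
      rw [hM_sub]; linarith [hst]
    rw [← enorm_eq_nnnorm, ← ofReal_norm] at h1
    have hMst : (0:ℝ) ≤ M t - M s := by linarith [hM_gap s t hst]
    exact (ENNReal.ofReal_le_ofReal_iff hMst).1 h1
  -- the reparametrized curve τ and the admissible curve γ
  set τ : ℝ → EuclideanSpace ℝ (Fin N) :=
    fun u => if u ≤ 0 then pa else if L ≤ u then pb else σ (φ u) with hτ_def
  have hτ0 : ∀ u : ℝ, u ≤ 0 → τ u = pa := fun u hu => by simp [hτ_def, hu]
  have hτL : ∀ u : ℝ, L ≤ u → τ u = pb := by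
    intro u hu
    have : ¬ u ≤ 0 := by linarith
    simp [hτ_def, this, hu]
  have hτval : ∀ u : ℝ, 0 < u → u < L → τ u = σ (φ u) := by
    intro u h0 h1
    have h0' : ¬ u ≤ 0 := by linarith
    have h1' : ¬ L ≤ u := by linarith
    simp [hτ_def, h0', h1']
  have h0lim : Tendsto (fun u => σ (φ u)) (nhdsWithin 0 (Set.Ioi 0)) (nhds pa) := by
    apply hpa.comp
    rw [tendsto_nhdsWithin_iff]
    constructor
    · apply Filter.Tendsto.mono_left _ nhdsWithin_le_nhds
      have := hφ_cont.tendsto 0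
      rwa [hφ0] at this
    · filter_upwards [Ioo_mem_nhdsGT hL_pos] with u hu
      exact hφmem u hu.1 hu.2
  have hLlim : Tendsto (fun u => σ (φ u)) (nhdsWithin L (Set.Iio L)) (nhds pb) := by
    apply hpb.comp
    rw [tendsto_nhdsWithin_iff]
    constructor
    · apply Filter.Tendsto.mono_left _ nhdsWithin_le_nhds
      have := hφ_cont.tendsto L
      rwa [hφL] at this
    · filter_upwards [Ioo_mem_nhdsLT hL_pos] with u hu
      exact hφmem u hu.1 hu.2
  -- core Lipschitz estimate for τ
  have hC1 : ∀ u v : ℝ, 0 < u → u ≤ v → v < L → ‖τ v - τ u‖ ≤ v - u := by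
    intro u v h0 huv h1
    rw [hτval u h0 (lt_of_le_of_lt huv h1), hτval v (lt_of_lt_of_le h0 huv) h1]
    have hu' := hφmem u h0 (lt_of_le_of_lt huv h1)
    have hv' := hφmem v (lt_of_lt_of_le h0 huv) h1
    have := hσM (φ u) hu' (φ v) hv' (hφ_mono.monotone huv)
    rwa [hMφ, hMφ] at this
  have hC0 : ∀ v : ℝ, 0 < v → v < L → ‖τ v - pa‖ ≤ v := by
    intro v h0 h1
    have hev : Set.Ioo (0:ℝ) v ∈ nhdsWithin (0:ℝ) (Set.Ioi 0) :=
      Ioo_mem_nhdsGT h0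
    have lim1 : Tendsto (fun w => ‖τ v - σ (φ w)‖) (nhdsWithin 0 (Set.Ioi 0))
        (nhds ‖τ v - pa‖) := ((tendsto_const_nhds.sub h0lim).norm)
    have lim2 : Tendsto (fun w : ℝ => v - w) (nhdsWithin 0 (Set.Ioi 0)) (nhds v) := by
      have : Tendsto (fun w : ℝ => v - w) (nhds 0) (nhds (v - 0)) :=
        ((continuous_const.sub continuous_id).tendsto 0)
      rw [sub_zero] at this
      exact this.mono_left nhdsWithin_le_nhds
    refine le_of_tendsto_of_tendsto lim1 lim2 ?_
    filter_upwards [hev] with w hw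
    have : ‖τ v - τ w‖ ≤ v - w := hC1 w v hw.1 hw.2.le h1
    rwa [hτval w hw.1 (hw.2.trans h1)] at this
  have hCL : ∀ u : ℝ, 0 < u → u < L → ‖pb - τ u‖ ≤ L - u := by
    intro u h0 h1
    have hev : Set.Ioo u L ∈ nhdsWithin L (Set.Iio L) :=
      Ioo_mem_nhdsLT h1
    have lim1 : Tendsto (fun w => ‖σ (φ w) - τ u‖) (nhdsWithin L (Set.Iio L))
        (nhds ‖pb - τ u‖) := ((hLlim.sub tendsto_const_nhds).norm)
    have lim2 : Tendsto (fun w : ℝ => w - u) (nhdsWithin L (Set.Iio L)) (nhds (L - u)) := by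
      exact ((continuous_id.sub continuous_const).tendsto L).mono_left nhdsWithin_le_nhds
    refine le_of_tendsto_of_tendsto lim1 lim2 ?_
    filter_upwards [hev] with w hw
    have : ‖τ w - τ u‖ ≤ w - u := hC1 u w h0 hw.1.le hw.2
    rwa [hτval w (h0.trans hw.1) hw.2] at this
  have hCLa : ‖pb - pa‖ ≤ L := by
    have hev : Set.Ioo (0:ℝ) L ∈ nhdsWithin (0:ℝ) (Set.Ioi 0) :=
      Ioo_mem_nhdsGT hL_pos
    have lim1 : Tendsto (fun w => ‖pb - σ (φ w)‖) (nhdsWithin 0 (Set.Ioi 0))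
        (nhds ‖pb - pa‖) := ((tendsto_const_nhds.sub h0lim).norm)
    refine le_of_tendsto_of_tendsto lim1 tendsto_const_nhds ?_
    filter_upwards [hev] with w hw
    have h1 := hCL w hw.1 hw.2
    rw [hτval w hw.1 hw.2] at h1
    calc ‖pb - σ (φ w)‖ ≤ L - w := h1
      _ ≤ L := by linarith [hw.1]
  have hτ1 : ∀ u v : ℝ, u ≤ v → ‖τ v - τ u‖ ≤ v - u := by
    intro u v huv
    by_cases hu0 : u ≤ 0
    · by_cases hv0 : v ≤ 0
      · rw [hτ0 u hu0, hτ0 v hv0, sub_self, norm_zero]; linarith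
      · push_neg at hv0
        by_cases hvL : L ≤ v
        · rw [hτ0 u hu0, hτL v hvL]
          calc ‖pb - pa‖ ≤ L := hCLa
            _ ≤ v - u := by linarith
        · push_neg at hvL
          rw [hτ0 u hu0]
          calc ‖τ v - pa‖ ≤ v := hC0 v hv0 hvL
            _ ≤ v - u := by linarith
    · push_neg at hu0
      by_cases huL : L ≤ u
      · rw [hτL u huL, hτL v (huL.trans huv), sub_self, norm_zero]; linarith
      · push_neg at huL
        by_cases hvL : L ≤ v
        · rw [hτL v hvL]
          calc ‖pb - τ u‖ ≤ L - u := hCL u hu0 huL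
            _ ≤ v - u := by linarith
        · push_neg at hvL
          exact hC1 u v hu0 huv hvL
  have hτ_lip : LipschitzWith 1 τ := by
    apply LipschitzWith.of_dist_le_mul
    intro u v
    simp only [NNReal.coe_one, one_mul, dist_eq_norm]
    rcases le_total u v with huv | hvu
    · rw [norm_sub_rev]
      calc ‖τ v - τ u‖ ≤ v - u := hτ1 u v huv
        _ ≤ |u - v| := by rw [abs_sub_comm, abs_of_nonneg (by linarith)]
    · calc ‖τ u - τ v‖ ≤ u - v := hτ1 v u hvu
        _ ≤ |u - v| := le_abs_self _
  -- the affine rescaling and the curve γ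
  set c : ℝ → ℝ := fun s => L * (s + 1) / 2 with hc_def
  have hc_cont : Continuous c := by fun_prop
  have hc_lip : LipschitzWith (Real.toNNReal (L / 2)) c := by
    apply LipschitzWith.of_dist_le_mul
    intro s t
    rw [Real.dist_eq, Real.dist_eq, Real.coe_toNNReal _ (by positivity)]
    have : c s - c t = (L / 2) * (s - t) := by rw [hc_def]; ring
    rw [this, abs_mul, abs_of_nonneg (by positivity : (0:ℝ) ≤ L / 2)]
  have hc_mono : StrictMono c := by
    intro s t hst
    have h1 : L * (s+1) < L * (t+1) := by
      apply mul_lt_mul_of_pos_left _ hL_pos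
      linarith
    show L * (s + 1) / 2 < L * (t + 1) / 2
    gcongr
  have hcm1 : c (-1) = 0 := by simp [hc_def]
  have hc1 : c 1 = L := by rw [hc_def]; ring
  have hcmem : ∀ s : ℝ, -1 < s → s < 1 → c s ∈ Set.Ioo 0 L := by
    intro s h1 h2
    constructor
    · rw [← hcm1]; exact hc_mono h1
    · rw [← hc1]; exact hc_mono h2
  set γ : ℝ → EuclideanSpace ℝ (Fin N) := fun s => τ (c s) with hγ_def
  have hγ_lip : LipschitzWith (1 * Real.toNNReal (L / 2)) γ := hτ_lip.comp hc_lip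
  have hγm1 : γ (-1) = pa := by rw [hγ_def]; simp only [hcm1]; exact hτ0 0 le_rfl
  have hγ1 : γ 1 = pb := by rw [hγ_def]; simp only [hc1]; exact hτL L le_rfl
  have hγval : ∀ s : ℝ, -1 < s → s < 1 → γ s = σ (φ (c s)) := by
    intro s h1 h2
    have := hcmem s h1 h2
    rw [hγ_def]
    exact hτval _ this.1 this.2
  have hγ_adm : AdmissibleCurve pa pb γ := by
    refine ⟨hγ_lip.continuous.continuousOn, hγm1, hγ1, ?_⟩
    refine ⟨1, ![(-1 : ℝ), 1], rfl, rfl, ?_, ?_⟩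
    · intro i j hij
      have hij' : i.val < j.val := hij
      have hj := j.isLt
      have h0 : i.val = 0 := by omega
      have h1 : j.val = 1 := by omega
      have hi : i = 0 := Fin.ext h0
      have hj1 : j = 1 := Fin.ext h1
      subst hi; subst hj1
      show ((-1 : ℝ) < 1)
      norm_num
    · intro i x hx
      refine ⟨1 * Real.toNNReal (L / 2), Set.univ, Filter.univ_mem, ?_⟩
      rw [lipschitzOnWith_univ]
      exact hγ_lip
  have hgeod : geod W pa pb ≤ curveCost W γ := by
    rw [geod]
    exact iInf₂_le γ hγ_adm
  -- continuity of σ on (a,b)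
  set G : ℝ → EuclideanSpace ℝ (Fin N) := (Set.Ioo a b).indicator g with hG_def
  have hG_meas : Measurable G := hg.indicator measurableSet_Ioo
  have hG_int : Integrable G := by
    refine ⟨hG_meas.aestronglyMeasurable, ?_⟩
    show (∫⁻ t, (‖G t‖₊ : ℝ≥0∞)) < ⊤
    calc ∫⁻ t, (‖G t‖₊ : ℝ≥0∞) = ∫⁻ t in Set.Ioo a b, (‖g t‖₊ : ℝ≥0∞) := by
          rw [← lintegral_indicator measurableSet_Ioo]
          congr 1; funext t
          by_cases ht : t ∈ Set.Ioo a b <;>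
            simp [hG_def, ht, Set.indicator_of_mem, Set.indicator_of_notMem]
      _ < ⊤ := hg1
  have hσ_cont : ContinuousOn σ (Set.Ioo a b) := by
    set t₀ : ℝ := (a + b) / 2 with ht₀_def
    have ht₀ : t₀ ∈ Set.Ioo a b := by constructor <;> (rw [ht₀_def]; linarith)
    have key : ∀ t ∈ Set.Ioo a b, σ t = σ t₀ + ∫ r in t₀..t, G r := by
      intro t ht
      have h1 := hFTC t₀ ht₀ t ht
      have h2 : ∫ r in t₀..t, g r = ∫ r in t₀..t, G r := by
        apply intervalIntegral.integral_congr
        intro r hr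
        have hr' : r ∈ Set.Ioo a b := by
          rcases le_total t₀ t with hch | hch
          · rw [Set.uIcc_of_le hch] at hr
            exact ⟨lt_of_lt_of_le ht₀.1 hr.1, lt_of_le_of_lt hr.2 ht.2⟩
          · rw [Set.uIcc_of_ge hch] at hr
            exact ⟨lt_of_lt_of_le ht.1 hr.1, lt_of_le_of_lt hr.2 ht₀.2⟩
        rw [hG_def, Set.indicator_of_mem hr']
      have : σ t - σ t₀ = ∫ r in t₀..t, G r := by rw [h1, h2]
      rw [← this]; abel
    have : ContinuousOn (fun t => σ t₀ + ∫ r in t₀..t, G r) (Set.Ioo a b) :=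
      (continuous_const.add (hG_int.continuous_primitive t₀)).continuousOn
    exact ContinuousOn.congr this key
  -- the energy density F and its primitive R
  set F : ℝ → ℝ≥0∞ :=
    (Set.Ioo a b).indicator (fun t => (‖g t‖₊ : ℝ≥0∞) ^ 2 + W (σ t)) with hF_def
  have hW_meas : Measurable W := hlsc.measurable
  have hF_aemeas : AEMeasurable F := by
    rw [hF_def, aemeasurable_indicator_iff measurableSet_Ioo]
    exact ((hg.nnnorm.coe_nnreal_ennreal.pow_const 2).aemeasurable.mono_measure Measure.restrict_le_self).add
      (hW_meas.comp_aemeasurable (hσ_cont.aemeasurable measurableSet_Ioo))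
  have hTF : (∫⁻ t, F t) = ∫⁻ t in Set.Ioo a b, ((‖g t‖₊ : ℝ≥0∞) ^ 2 + W (σ t)) := by
    rw [hF_def, lintegral_indicator measurableSet_Ioo]
  have hTF_ne : (∫⁻ t, F t) ≠ ⊤ := by rw [hTF]; exact hT
  have hF_lt_top : ∀ᵐ t, F t < ⊤ := ae_lt_top' hF_aemeas hTF_ne
  set f : ℝ → ℝ := fun t => (F t).toReal with hf_def
  have hf_nonneg : ∀ t, 0 ≤ f t := fun t => ENNReal.toReal_nonneg
  have hf_int : Integrable f := integrable_toReal_of_lintegral_ne_top hF_aemeas hTF_ne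
  have hf_zero : ∀ t, t ∉ Set.Ioo a b → f t = 0 := by
    intro t ht
    rw [hf_def]
    simp [hF_def, Set.indicator_of_notMem ht]
  set prim : ℝ → ℝ := fun x => ∫ t in a..x, f t with hprim_def
  have hprim_cont : Continuous prim := hf_int.continuous_primitive a
  have hprim_sub : ∀ x y : ℝ, prim y - prim x = ∫ t in x..y, f t := by
    intro x y
    rw [hprim_def]
    exact intervalIntegral.integral_interval_sub_left
      (hf_int.intervalIntegrable) (hf_int.intervalIntegrable)
  have hprim_mono : Monotone prim := by
    intro x y hxy
    have h1 : 0 ≤ prim y - prim x := by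
      rw [hprim_sub]
      exact intervalIntegral.integral_nonneg hxy (fun r _ => hf_nonneg r)
    linarith
  set R : ℝ → ℝ := fun s => prim (φ (c s)) with hR_def
  have hR_mono : Monotone R := fun s t hst =>
    hprim_mono (hφ_mono.monotone (hc_mono.monotone hst))
  have hR_cont : Continuous R := hprim_cont.comp (hφ_cont.comp hc_cont)
  set S : StieltjesFunction ℝ :=
    ⟨R, hR_mono, fun x => (hR_cont.continuousAt).continuousWithinAt⟩ with hS_def
  have hS_coe : ∀ x, S x = R x := fun x => rfl
  -- values of R at ±∞
  have hRbot : ∀ s : ℝ, s ≤ -1 → R s = 0 := by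
    intro s hs
    have hcs : c s ≤ 0 := by
      rw [← hcm1]
      exact hc_mono.monotone hs
    have hφs : φ (c s) ≤ a := by
      rw [← hφ0]
      exact hφ_mono.monotone hcs
    rw [hR_def]
    show prim (φ (c s)) = 0
    rw [hprim_def]
    show (∫ t in a..(φ (c s)), f t) = 0
    have : EqOn f 0 (Set.uIcc a (φ (c s))) := by
      intro r hr
      rw [Set.uIcc_of_ge hφs] at hr
      exact hf_zero r (fun hmem => absurd (lt_of_lt_of_le hmem.1 hr.2) (lt_irrefl a))
    rw [intervalIntegral.integral_congr this]
    simp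
  have hInt_f : (∫ t, f t) = (∫⁻ t, F t).toReal := by
    rw [MeasureTheory.integral_toReal hF_aemeas hF_lt_top]
  have hRtop : ∀ s : ℝ, 1 ≤ s → R s = (∫⁻ t, F t).toReal := by
    intro s hs
    have hcs : L ≤ c s := by
      rw [← hc1]
      exact hc_mono.monotone hs
    have hφs : b ≤ φ (c s) := by
      rw [← hφL]
      exact hφ_mono.monotone hcs
    rw [hR_def, ← hInt_f]
    show prim (φ (c s)) = ∫ t, f t
    rw [hprim_def]
    show (∫ t in a..(φ (c s)), f t) = ∫ t, f t
    rw [intervalIntegral.integral_of_le (hab.le.trans hφs)]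
    have hfind : f = (Set.Ioc a (φ (c s))).indicator f := by
      funext t
      by_cases ht : t ∈ Set.Ioc a (φ (c s))
      · rw [Set.indicator_of_mem ht]
      · rw [Set.indicator_of_notMem ht]
        apply hf_zero
        intro hmem
        exact ht ⟨hmem.1, le_trans hmem.2.le hφs⟩
    conv_rhs => rw [hfind]
    rw [MeasureTheory.integral_indicator measurableSet_Ioc]
  have hS_univ : S.measure Set.univ = ∫⁻ t, F t := by
    have hbot : Tendsto S atBot (nhds 0) := by
      apply Tendsto.congr' _ (tendsto_const_nhds (α := ℝ))
      filter_upwards [Filter.Iic_mem_atBot (-1 : ℝ)] with s hs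
      exact (hRbot s hs).symm
    have htop : Tendsto S atTop (nhds ((∫⁻ t, F t).toReal)) := by
      apply Tendsto.congr' _ (tendsto_const_nhds (α := ℝ))
      filter_upwards [Filter.Ici_mem_atTop (1 : ℝ)] with s hs
      exact (hRtop s hs).symm
    rw [S.measure_univ hbot htop, sub_zero, ENNReal.ofReal_toReal hTF_ne]
  -- the key chain estimate
  have hchain : ∀ (r : ℝ≥0) (s₀ s' : ℝ), -1 < s₀ → s₀ < s' → s' < 1 →
      (∀ t ∈ Set.Ioo (φ (c s₀)) (φ (c s')), ((r : ℝ≥0∞))^2 ≤ W (σ t)) →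
      2 * (r : ℝ) * ‖γ s' - γ s₀‖ ≤ R s' - R s₀ := by
    intro r s₀ s' hm1 hss hs1 hWlow
    set t₀ : ℝ := φ (c s₀) with ht₀
    set t' : ℝ := φ (c s') with ht'
    have hcs₀ := hcmem s₀ hm1 (hss.trans hs1)
    have hcs' := hcmem s' (hm1.trans hss) hs1
    have ht₀ab : t₀ ∈ Set.Ioo a b := hφmem _ hcs₀.1 hcs₀.2
    have ht'ab : t' ∈ Set.Ioo a b := hφmem _ hcs'.1 hcs'.2
    have htt' : t₀ < t' := hφ_mono (hc_mono hss)
    have hRnn : 0 ≤ R s' - R s₀ := by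
      have := hR_mono (hss.le)
      linarith
    -- Step 1 : ofReal (R s' - R s₀) = ∫⁻ t in Ioc t₀ t', F t
    have step1 : ENNReal.ofReal (R s' - R s₀) = ∫⁻ t in Set.Ioc t₀ t', F t := by
      have e1 : R s' - R s₀ = ∫ t in t₀..t', f t := hprim_sub t₀ t'
      rw [e1, intervalIntegral.integral_of_le htt'.le,
        MeasureTheory.ofReal_integral_eq_lintegral_ofReal (hf_int.restrict)
          (ae_of_all _ hf_nonneg)]
      apply lintegral_congr_ae
      filter_upwards [ae_restrict_of_ae hF_lt_top] with t htop
      rw [hf_def]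
      exact ENNReal.ofReal_toReal htop.ne
    -- Step 2-6 : lower bound by 2 r ‖γ s' - γ s₀‖
    have step2 : (2 * r * ‖γ s' - γ s₀‖₊ : ℝ≥0∞) ≤ ∫⁻ t in Set.Ioc t₀ t', F t := by
      calc (2 * r * ‖γ s' - γ s₀‖₊ : ℝ≥0∞)
          = 2 * r * (‖σ t' - σ t₀‖₊ : ℝ≥0∞) := by
            rw [hγval s' (hm1.trans hss) hs1, hγval s₀ hm1 (hss.trans hs1)]
        _ ≤ 2 * r * ∫⁻ t in Set.Ioo t₀ t', (‖g t‖₊ : ℝ≥0∞) := by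
            gcongr
            exact hσ_sub t₀ ht₀ab t' ht'ab htt'.le
        _ = ∫⁻ t in Set.Ioo t₀ t', 2 * r * (‖g t‖₊ : ℝ≥0∞) := by
            rw [lintegral_const_mul _ hg.nnnorm.coe_nnreal_ennreal]
        _ ≤ ∫⁻ t in Set.Ioo t₀ t', F t := by
            apply lintegral_mono_ae
            filter_upwards [ae_restrict_mem measurableSet_Ioo] with t ht
            have htab : t ∈ Set.Ioo a b :=
              ⟨ht₀ab.1.trans ht.1, ht.2.trans ht'ab.2⟩
            rw [hF_def, Set.indicator_of_mem htab]
            calc (2 * r * ‖g t‖₊ : ℝ≥0∞) ≤ (‖g t‖₊ : ℝ≥0∞)^2 + (r : ℝ≥0∞)^2 :=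
                  aux_amgm r ‖g t‖₊
              _ ≤ (‖g t‖₊ : ℝ≥0∞)^2 + W (σ t) := by
                  gcongr
                  exact hWlow t ht
        _ ≤ ∫⁻ t in Set.Ioc t₀ t', F t := by
            rw [← Measure.restrict_congr_set Ioo_ae_eq_Ioc]
    have hfin : (2 * r * ‖γ s' - γ s₀‖₊ : ℝ≥0∞) ≠ ⊤ := by
      exact ENNReal.mul_ne_top (ENNReal.mul_ne_top (by simp) ENNReal.coe_ne_top)
        ENNReal.coe_ne_top
    have hupper := step2.trans_eq step1.symm
    have h3 := ENNReal.toReal_mono ENNReal.ofReal_ne_top hupper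
    rw [ENNReal.toReal_ofReal hRnn] at h3
    calc 2 * (r : ℝ) * ‖γ s' - γ s₀‖
        = ((2 * r * ‖γ s' - γ s₀‖₊ : ℝ≥0∞)).toReal := by
          rw [ENNReal.toReal_mul, ENNReal.toReal_mul]
          norm_num [coe_nnnorm]
      _ ≤ R s' - R s₀ := h3
  -- the pointwise a.e. estimate
  have hptwise : ∀ᵐ s : ℝ, s ∈ Set.Ioo (-1:ℝ) 1 →
      2 * (W (γ s)) ^ (1/2 : ℝ) * (‖deriv γ s‖₊ : ℝ≥0∞) ≤
        S.measure.rnDeriv volume s := by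
    filter_upwards [hγ_lip.ae_differentiableAt (μ := volume), S.ae_hasDerivAt]
      with s hdiff hSd hs
    set d : ℝ := (S.measure.rnDeriv volume s).toReal with hd_def
    have hd_nonneg : 0 ≤ d := ENNReal.toReal_nonneg
    have hRd : HasDerivAt R d s := hSd
    have hγd : HasDerivAt γ (deriv γ s) s := hdiff.hasDerivAt
    suffices hsuff : 2 * (W (γ s)) ^ (1/2 : ℝ) * (‖deriv γ s‖₊ : ℝ≥0∞) ≤
        ENNReal.ofReal d by
      refine hsuff.trans ?_
      rw [hd_def]
      exact ENNReal.ofReal_toReal_le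
    by_cases hv0 : (‖deriv γ s‖₊ : ℝ≥0∞) = 0
    · rw [hv0, mul_zero]
      exact zero_le
    -- the two one-sided limits of difference quotients
    have limR : Tendsto (fun s' => (R s' - R s) / (s' - s)) (nhdsWithin s (Set.Ioi s))
        (nhds d) := by
      have h1 := hasDerivAt_iff_tendsto_slope.mp hRd
      have h2 := h1.mono_left
        (nhdsWithin_mono s (fun x (hx : x ∈ Set.Ioi s) => ne_of_gt hx))
      apply h2.congr
      intro x
      rw [slope_def_field]
    have limγ : Tendsto (fun s' => ‖γ s' - γ s‖ / (s' - s)) (nhdsWithin s (Set.Ioi s))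
        (nhds ‖deriv γ s‖) := by
      have h1 := hasDerivAt_iff_tendsto_slope.mp hγd
      have h2 := (h1.mono_left
        (nhdsWithin_mono s (fun x (hx : x ∈ Set.Ioi s) => ne_of_gt hx))).norm
      apply Tendsto.congr' _ h2
      filter_upwards [self_mem_nhdsWithin] with x (hx : x ∈ Set.Ioi s)
      have hxs : 0 < x - s := sub_pos.2 hx
      rw [slope, vsub_eq_sub, norm_smul, Real.norm_eq_abs, abs_inv,
        abs_of_pos hxs, div_eq_inv_mul]
    -- the key real inequality
    have hr2d : ∀ r : ℝ≥0, ((r : ℝ≥0∞))^2 < W (γ s) →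
        2 * (r : ℝ) * ‖deriv γ s‖ ≤ d := by
      intro r hrW
      obtain ⟨ε, hε, hball⟩ := Metric.eventually_nhds_iff.1 (hlsc (γ s) _ hrW)
      set δ : ℝ := min (ε / (L + 1)) (1 - s) with hδ_def
      have hδ_pos : 0 < δ := by
        apply lt_min
        · positivity
        · linarith [hs.2]
      have hLip : ∀ s' : ℝ, |s' - s| < δ → dist (γ s') (γ s) < ε := by
        intro s' hs'
        have h1 := hγ_lip.dist_le_mul s' s
        have h2 : ((1 * Real.toNNReal (L / 2) : ℝ≥0) : ℝ) = L / 2 := by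
          rw [one_mul, Real.coe_toNNReal _ (by positivity)]
        rw [h2] at h1
        have h3 : |s' - s| < ε / (L + 1) := lt_of_lt_of_le hs' (min_le_left _ _)
        have h4 : dist s' s = |s' - s| := rfl
        have hL1 : 0 < L + 1 := by linarith
        have h5 : |s' - s| * (L + 1) < ε := (lt_div_iff₀ hL1).1 h3
        have h6 : 0 ≤ |s' - s| := abs_nonneg _
        calc dist (γ s') (γ s) ≤ L / 2 * dist s' s := h1
          _ < ε := by
            rw [h4]
            nlinarith [mul_nonneg h6 (by linarith : (0:ℝ) ≤ L/2 + 1)]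
      -- the W-window
      have hwin : ∀ s' : ℝ, s < s' → s' < s + δ →
          ∀ t ∈ Set.Ioo (φ (c s)) (φ (c s')), ((r : ℝ≥0∞))^2 ≤ W (σ t) := by
        intro s' hss' hs'δ t ht
        have hs'1 : s' < 1 := by
          have : δ ≤ 1 - s := min_le_right _ _
          linarith
        set u : ℝ := M t with hu_def
        have hcu : c s < u ∧ u < c s' := by
          constructor
          · have := hM_strict ht.1
            rwa [hMφ, ← hu_def] at this
          · have := hM_strict ht.2
            rwa [hMφ, ← hu_def] at this
        set s₂ : ℝ := 2 * u / L - 1 with hs₂_def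
        have hcs₂ : c s₂ = u := by
          show L * ((2 * u / L - 1) + 1) / 2 = u
          field_simp
          ring
        have hs₂1 : s < s₂ := by
          have := hcu.1
          rw [← hcs₂] at this
          exact hc_mono.lt_iff_lt.1 this
        have hs₂2 : s₂ < s' := by
          have := hcu.2
          rw [← hcs₂] at this
          exact hc_mono.lt_iff_lt.1 this
        have hφu : φ u = t := by rw [hu_def, hφM]
        have hγs₂ : γ s₂ = σ t := by
          rw [hγval s₂ (lt_trans hs.1 hs₂1) (hs₂2.trans hs'1), hcs₂, hφu]
        have hdist : dist (γ s₂) (γ s) < ε := by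
          apply hLip
          rw [abs_of_pos (by linarith : (0:ℝ) < s₂ - s)]
          linarith
        have := hball hdist
        rw [hγs₂] at this
        exact this.le
      -- apply the chain estimate and pass to the limit
      have hineq : ∀ s' ∈ Set.Ioo s (s + δ),
          2 * (r : ℝ) * (‖γ s' - γ s‖ / (s' - s)) ≤ (R s' - R s) / (s' - s) := by
        intro s' hs'
        have hs'1 : s' < 1 := by
          have : δ ≤ 1 - s := min_le_right _ _
          linarith [hs'.2]
        have hch := hchain r s s' hs.1 hs'.1 hs'1 (hwin s' hs'.1 hs'.2)
        have hpos : 0 < s' - s := sub_pos.2 hs'.1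
        have h7 := (div_le_div_iff_of_pos_right hpos).2 hch
        rwa [mul_div_assoc] at h7
      have hIooev : Set.Ioo s (s + δ) ∈ nhdsWithin s (Set.Ioi s) :=
        Ioo_mem_nhdsGT (by linarith)
      refine le_of_tendsto_of_tendsto (limγ.const_mul (2 * (r:ℝ))) limR ?_
      filter_upwards [hIooev] with s' hs'
      exact hineq s' hs'
    -- assemble the ENNReal inequality
    have h2v0 : (2 * (‖deriv γ s‖₊ : ℝ≥0∞)) ≠ 0 := by
      simp only [ne_eq, mul_eq_zero, not_or]
      exact ⟨by norm_num, hv0⟩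
    have h2vtop : (2 * (‖deriv γ s‖₊ : ℝ≥0∞)) ≠ ⊤ := by
      exact ENNReal.mul_ne_top (by norm_num) ENNReal.coe_ne_top
    have hhalf : (W (γ s)) ^ (1/2 : ℝ) ≤
        ENNReal.ofReal d / (2 * (‖deriv γ s‖₊ : ℝ≥0∞)) := by
      apply ENNReal.le_of_forall_nnreal_lt
      intro q hq
      have hq2 : ((q : ℝ≥0∞))^2 < W (γ s) := by
        have h1 : ((q : ℝ≥0∞))^2 < ((W (γ s)) ^ (1/2 : ℝ))^2 :=
          ENNReal.pow_lt_pow_left (by norm_num) hq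
        have h2 : ((W (γ s)) ^ (1/2 : ℝ))^2 = W (γ s) := by
          rw [← ENNReal.rpow_natCast ((W (γ s)) ^ (1/2 : ℝ)) 2, ← ENNReal.rpow_mul]
          norm_num
        rwa [h2] at h1
      have hd2 := hr2d q hq2
      rw [ENNReal.le_div_iff_mul_le (Or.inl h2v0) (Or.inl h2vtop)]
      have he : (q : ℝ≥0∞) * (2 * (‖deriv γ s‖₊ : ℝ≥0∞)) =
          ENNReal.ofReal ((q : ℝ) * (2 * ‖deriv γ s‖)) := by
        rw [ENNReal.ofReal_mul q.coe_nonneg, ENNReal.ofReal_mul (by norm_num : (0:ℝ) ≤ 2)]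
        rw [ENNReal.ofReal_coe_nnreal, ofReal_norm, enorm_eq_nnnorm]
        norm_num
      rw [he]
      exact ENNReal.ofReal_le_ofReal (by nlinarith [hd2] : (q:ℝ) * (2 * ‖deriv γ s‖) ≤ d)
    calc 2 * (W (γ s)) ^ (1/2 : ℝ) * (‖deriv γ s‖₊ : ℝ≥0∞)
        = (W (γ s)) ^ (1/2 : ℝ) * (2 * (‖deriv γ s‖₊ : ℝ≥0∞)) := by ring
      _ ≤ (ENNReal.ofReal d / (2 * (‖deriv γ s‖₊ : ℝ≥0∞))) *
          (2 * (‖deriv γ s‖₊ : ℝ≥0∞)) := by gcongr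
      _ = ENNReal.ofReal d := by
          rw [ENNReal.div_mul_cancel h2v0 h2vtop]
  calc geod W pa pb ≤ curveCost W γ := hgeod
    _ = ∫⁻ s in Set.Ioo (-1:ℝ) 1, 2 * (W (γ s)) ^ (1/2 : ℝ) * (‖deriv γ s‖₊ : ℝ≥0∞) := by
        rw [curveCost, ← Measure.restrict_congr_set Ioo_ae_eq_Icc]
    _ ≤ ∫⁻ s in Set.Ioo (-1:ℝ) 1, S.measure.rnDeriv volume s :=
        lintegral_mono_ae ((ae_restrict_iff' measurableSet_Ioo).2 hptwise)
    _ ≤ ∫⁻ s, S.measure.rnDeriv volume s := setLIntegral_le_lintegral _ _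
    _ ≤ S.measure Set.univ := Measure.lintegral_rnDeriv_le
    _ = ∫⁻ t, F t := hS_univ
    _ = ∫⁻ t in Set.Ioo a b, ((‖g t‖₊ : ℝ≥0∞) ^ 2 + W (σ t)) := hTF
end

section
/- Let W : ℝ^N → [0,∞] be lower semicontinuous satisfying (H1) and (H2). Then every σ ∈ H^1_loc(ℝ, ℝ^N) with finite energy ∫_ℝ (|σ'(t)|² + W(σ(t))) dt < ∞ has limits at ±∞, i.e., there exist u⁻, u⁺ ∈ ℝ^N with W(u⁻) = W(u⁺) = 0 such that σ(t) → u^± as t → ±∞. -/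
open MeasureTheory Metric Set Filter Topology
open scoped ENNReal NNReal

lemma holder_aux {N : ℕ} (g : ℝ → EuclideanSpace ℝ (Fin N)) (hg : Measurable g)
    {E : ℝ≥0∞} (hEfin : E ≠ ⊤) (hle : (∫⁻ t : ℝ, (‖g t‖₊ : ℝ≥0∞) ^ 2) ≤ E)
    {s t : ℝ} (hst : s ≤ t) :
    ‖(∫ r in s..t, g r)‖ ≤ Real.sqrt E.toReal * Real.sqrt (t - s) := by
  rw [intervalIntegral.integral_of_le hst]
  refine le_trans (norm_integral_le_lintegral_norm _) ?_
  have h2 : Real.HolderConjugate 2 2 := Real.HolderConjugate.two_two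
  have hCS := ENNReal.lintegral_mul_le_Lp_mul_Lq (volume.restrict (Ioc s t)) h2
    (f := fun r => (‖g r‖₊ : ℝ≥0∞)) (g := fun _ => 1)
    (hg.nnnorm.coe_nnreal_ennreal.aemeasurable) aemeasurable_const
  simp only [mul_one, Pi.mul_apply, Pi.one_apply, ENNReal.one_rpow, lintegral_const,
    Measure.restrict_apply, MeasurableSet.univ, univ_inter] at hCS
  have hIoc : (volume (Ioc s t)) = ENNReal.ofReal (t - s) := by
    simp [Real.volume_Ioc]
  have hpow : ∀ x : ℝ≥0∞, x ^ (2:ℝ) = x ^ (2:ℕ) := fun x => by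
    rw [← ENNReal.rpow_natCast]; norm_num
  have hsub : (∫⁻ r in Ioc s t, (‖g r‖₊ : ℝ≥0∞) ^ (2:ℝ)) ≤ E := by
    refine le_trans ?_ hle
    simp_rw [hpow]
    exact setLIntegral_le_lintegral _ _
  have key : (∫⁻ r in Ioc s t, ENNReal.ofReal ‖g r‖) ≤ E ^ (1/2 : ℝ) * (ENNReal.ofReal (t - s)) ^ (1/2 : ℝ) := by
    calc (∫⁻ r in Ioc s t, ENNReal.ofReal ‖g r‖)
        = ∫⁻ r in Ioc s t, (‖g r‖₊ : ℝ≥0∞) := by simp_rw [ofReal_norm]; rfl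
      _ ≤ (∫⁻ r in Ioc s t, (‖g r‖₊ : ℝ≥0∞) ^ (2:ℝ)) ^ (1/(2:ℝ)) * (1 * volume (Ioc s t)) ^ (1/(2:ℝ)) := hCS
      _ ≤ E ^ (1/2 : ℝ) * (ENNReal.ofReal (t - s)) ^ (1/2 : ℝ) := by
          rw [one_mul, hIoc]; gcongr
  have hrhs : Real.sqrt E.toReal * Real.sqrt (t - s) = (E ^ (1/2:ℝ) * (ENNReal.ofReal (t - s)) ^ (1/2:ℝ)).toReal := by
    rw [ENNReal.toReal_mul, Real.sqrt_eq_rpow, Real.sqrt_eq_rpow, ENNReal.toReal_rpow]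
    congr 1
    rw [← ENNReal.toReal_rpow, ENNReal.toReal_ofReal (by linarith)]
  rw [hrhs]
  refine ENNReal.toReal_mono ?_ key
  exact ENNReal.mul_ne_top (by simp [ENNReal.rpow_eq_top_iff, hEfin]) (by simp [ENNReal.rpow_eq_top_iff])

lemma lowbound {N : ℕ} (W : EuclideanSpace ℝ (Fin N) → ℝ≥0∞)
    (hlsc : LowerSemicontinuous W)
    (hH2 : ∃ c : ℝ≥0∞, 0 < c ∧ ∃ R : ℝ, ∀ z : EuclideanSpace ℝ (Fin N), R ≤ ‖z‖ → c ≤ W z)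
    {ε : ℝ} (hε : 0 < ε) :
    ∃ δ : ℝ≥0∞, 0 < δ ∧ ∀ z, (∀ w, W w = 0 → ε ≤ dist z w) → δ ≤ W z := by
  obtain ⟨c, hc, R, hR⟩ := hH2
  set S : Set (EuclideanSpace ℝ (Fin N)) :=
    closedBall 0 R \ ⋃ w ∈ {w | W w = 0}, ball w ε with hSdef
  have hScomp : IsCompact S :=
    (isCompact_closedBall _ _).diff (isOpen_biUnion (fun w _ => isOpen_ball))
  have hSpos : ∀ x ∈ S, 0 < W x := by
    intro x hx
    refine pos_iff_ne_zero.mpr (fun h0 : W x = 0 => hx.2 ?_)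
    exact mem_biUnion h0 (mem_ball_self hε)
  set a : EuclideanSpace ℝ (Fin N) → ℝ≥0∞ := fun x => min (W x) 1 / 2 with ha
  have halt : ∀ x ∈ S, a x < W x := by
    intro x hx
    calc a x < min (W x) 1 := ENNReal.half_lt_self
          ((lt_min (hSpos x hx) one_pos).ne')
          (ne_top_of_le_ne_top ENNReal.one_ne_top (min_le_right _ _))
      _ ≤ W x := min_le_left _ _
  have hcov : S ⊆ ⋃ i : S, {y | a ↑i < W y} := by
    intro x hx
    exact mem_iUnion.mpr ⟨⟨x, hx⟩, halt x hx⟩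
  obtain ⟨t, ht⟩ := hScomp.elim_finite_subcover (fun i : S => {y | a ↑i < W y})
    (fun i => hlsc.isOpen_preimage _) hcov
  have hapos : ∀ x ∈ S, 0 < a x := fun x hx => by
    simp only [ha, ENNReal.div_pos_iff]
    constructor
    · exact (lt_min (hSpos x hx) one_pos).ne'
    · norm_num
  refine ⟨min c (t.inf fun i => a ↑i), lt_min hc ?_, ?_⟩
  · rw [Finset.lt_inf_iff (by norm_num : (0:ℝ≥0∞) < ⊤)]
    exact fun i _ => hapos i i.2
  · intro z hz
    rcases le_total R ‖z‖ with h | h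
    · exact le_trans (min_le_left _ _) (hR z h)
    · have hzS : z ∈ S := by
        refine ⟨mem_closedBall_zero_iff.mpr h, ?_⟩
        intro hmem
        obtain ⟨w, hw, hzw⟩ := mem_iUnion₂.mp hmem
        exact absurd (hz w hw) (not_le.mpr (mem_ball.mp hzw))
      obtain ⟨i, hit, hi⟩ := mem_iUnion₂.mp (ht hzS)
      exact le_trans (min_le_right _ _) (le_trans (Finset.inf_le hit) hi.le)

lemma not_freq_atTop {U : Set ℝ} (hU : MeasurableSet U) (hfin : volume U < ⊤) {η : ℝ}
    (hη : 0 < η) : ¬ ∃ᶠ t in atTop, Icc t (t + η) ⊆ U := by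
  intro hfreq
  have hmono : Antitone (fun n : ℕ => U ∩ Ici (n : ℝ)) := by
    intro m n hmn
    exact inter_subset_inter_right _ (Ici_subset_Ici.mpr (by exact_mod_cast hmn))
  have htend := tendsto_measure_iInter_atTop (μ := volume) (s := fun n : ℕ => U ∩ Ici (n : ℝ))
    (fun n => (hU.inter measurableSet_Ici).nullMeasurableSet) hmono
    ⟨0, (lt_of_le_of_lt (measure_mono inter_subset_left) hfin).ne⟩
  have hempty : ⋂ n : ℕ, (U ∩ Ici (n : ℝ)) = ∅ := by
    ext x
    simp only [mem_iInter, mem_inter_iff, mem_Ici, mem_empty_iff_false, iff_false, not_forall]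
    obtain ⟨n, hn⟩ := exists_nat_gt x
    exact ⟨n, fun h => absurd h.2 (not_le.mpr hn)⟩
  rw [hempty, measure_empty] at htend
  obtain ⟨n, hn⟩ := (htend.eventually_lt_const (ENNReal.ofReal_pos.mpr hη)).exists
  obtain ⟨t, hsub, hge⟩ := (hfreq.and_eventually (eventually_ge_atTop (n : ℝ))).exists
  have hss : Icc t (t + η) ⊆ U ∩ Ici (n : ℝ) := fun x hx =>
    ⟨hsub hx, le_trans hge hx.1⟩
  have : volume (Icc t (t + η)) ≤ volume (U ∩ Ici (n : ℝ)) := measure_mono hss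
  rw [Real.volume_Icc] at this
  simp only [add_sub_cancel_left] at this
  exact absurd (lt_of_le_of_lt this hn) (lt_irrefl _)

lemma not_freq_atBot {U : Set ℝ} (hU : MeasurableSet U) (hfin : volume U < ⊤) {η : ℝ}
    (hη : 0 < η) : ¬ ∃ᶠ t in atBot, Icc t (t + η) ⊆ U := by
  intro hfreq
  have hmono : Antitone (fun n : ℕ => U ∩ Iic (-(n : ℝ))) := by
    intro m n hmn
    exact inter_subset_inter_right _ (Iic_subset_Iic.mpr (by exact_mod_cast neg_le_neg (by exact_mod_cast hmn)))
  have htend := tendsto_measure_iInter_atTop (μ := volume) (s := fun n : ℕ => U ∩ Iic (-(n : ℝ)))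
    (fun n => (hU.inter measurableSet_Iic).nullMeasurableSet) hmono
    ⟨0, (lt_of_le_of_lt (measure_mono inter_subset_left) hfin).ne⟩
  have hempty : ⋂ n : ℕ, (U ∩ Iic (-(n : ℝ))) = ∅ := by
    ext x
    simp only [mem_iInter, mem_inter_iff, mem_Iic, mem_empty_iff_false, iff_false, not_forall]
    obtain ⟨n, hn⟩ := exists_nat_gt (-x)
    refine ⟨n, fun h => ?_⟩
    have := h.2
    linarith
  rw [hempty, measure_empty] at htend
  obtain ⟨n, hn⟩ := (htend.eventually_lt_const (ENNReal.ofReal_pos.mpr hη)).exists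
  obtain ⟨t, hsub, hge⟩ := (hfreq.and_eventually (eventually_le_atBot (-(n : ℝ) - η))).exists
  have hss : Icc t (t + η) ⊆ U ∩ Iic (-(n : ℝ)) := fun x hx =>
    ⟨hsub hx, le_trans hx.2 (by linarith)⟩
  have : volume (Icc t (t + η)) ≤ volume (U ∩ Iic (-(n : ℝ))) := measure_mono hss
  rw [Real.volume_Icc] at this
  simp only [add_sub_cancel_left] at this
  exact absurd (lt_of_le_of_lt this hn) (lt_irrefl _)

section scratch
variable {N : ℕ}

theorem aux_atTop (W : EuclideanSpace ℝ (Fin N) → ℝ≥0∞)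
    (hlsc : LowerSemicontinuous W)
    (hH1 : {z : EuclideanSpace ℝ (Fin N) | W z = 0}.Finite)
    (hH2 : ∃ c : ℝ≥0∞, 0 < c ∧ ∃ R : ℝ, ∀ z : EuclideanSpace ℝ (Fin N), R ≤ ‖z‖ → c ≤ W z)
    (σ g : ℝ → EuclideanSpace ℝ (Fin N)) (hσ : Continuous σ) (hg : Measurable g)
    (hFTC : ∀ s t : ℝ, σ t - σ s = ∫ r in s..t, g r)
    (hE : (∫⁻ t : ℝ, ((‖g t‖₊ : ℝ≥0∞) ^ 2 + W (σ t))) < ⊤) :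
    ∃ u : EuclideanSpace ℝ (Fin N), W u = 0 ∧ Tendsto σ atTop (𝓝 u) := by
  classical
  -- finiteness of the two pieces of the energy
  have hE2 : (∫⁻ t : ℝ, (‖g t‖₊ : ℝ≥0∞) ^ 2) < ⊤ :=
    lt_of_le_of_lt (lintegral_mono fun t => le_self_add) hE
  have hEW : (∫⁻ t : ℝ, W (σ t)) < ⊤ :=
    lt_of_le_of_lt (lintegral_mono fun t => le_add_self) hE
  set CE : ℝ := Real.sqrt (∫⁻ t : ℝ, (‖g t‖₊ : ℝ≥0∞) ^ 2).toReal with hCE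
  have hCE0 : 0 ≤ CE := Real.sqrt_nonneg _
  have hHolder : ∀ s t : ℝ, s ≤ t → dist (σ t) (σ s) ≤ CE * Real.sqrt (t - s) := by
    intro s t hst
    rw [dist_eq_norm, hFTC s t]
    exact holder_aux g hg hE2.ne le_rfl hst
  have hMeasW : Measurable fun t => W (σ t) := hlsc.measurable.comp hσ.measurable
  -- the "far from all wells" sets
  set U : ℝ → Set ℝ := fun ε => {t | ∀ w, W w = 0 → ε ≤ dist (σ t) w} with hU
  have hUclosed : ∀ ε : ℝ, IsClosed (U ε) := by
    intro ε
    have : U ε = ⋂ w, ⋂ (_ : W w = 0), {t | ε ≤ dist (σ t) w} := by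
      ext t; simp [hU]
    rw [this]
    exact isClosed_iInter fun w => isClosed_iInter fun _ =>
      isClosed_le continuous_const (hσ.dist continuous_const)
  have hUfin : ∀ ε : ℝ, 0 < ε → volume (U ε) < ⊤ := by
    intro ε hε
    obtain ⟨δ, hδ, hδle⟩ := lowbound W hlsc hH2 hε
    have hsub : U ε ⊆ {t | δ ≤ W (σ t)} := fun t ht => hδle (σ t) ht
    have hMarkov := mul_meas_ge_le_lintegral (μ := volume) hMeasW δ
    by_contra h
    have hvol : volume (U ε) = ⊤ := by
      simpa using h
    have : volume {t | δ ≤ W (σ t)} = ⊤ :=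
      top_le_iff.mp (hvol ▸ measure_mono hsub)
    rw [this, ENNReal.mul_top hδ.ne'] at hMarkov
    exact absurd (lt_of_le_of_lt hMarkov hEW) (lt_irrefl _)
  -- eventually near the wells
  have hnear : ∀ ε : ℝ, 0 < ε → ∀ᶠ t in atTop, ∃ w, W w = 0 ∧ dist (σ t) w < ε := by
    intro ε hε
    by_contra h
    have hfreq : ∃ᶠ t in atTop, ∀ w, W w = 0 → ε ≤ dist (σ t) w := by
      rw [not_eventually] at h
      refine h.mono fun t ht => ?_
      push_neg at ht
      exact ht
    set η : ℝ := (ε / (2 * (CE + 1))) ^ 2 with hη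
    have hηpos : 0 < η := by positivity
    have hfreq2 : ∃ᶠ t in atTop, Icc t (t + η) ⊆ U (ε / 2) := by
      refine hfreq.mono fun t ht => ?_
      intro x hx w hw
      have hd : dist (σ x) (σ t) ≤ CE * Real.sqrt (x - t) := hHolder t x hx.1
      have hsq : Real.sqrt (x - t) ≤ ε / (2 * (CE + 1)) := by
        rw [show ε / (2 * (CE + 1)) = Real.sqrt η by
          rw [hη, Real.sqrt_sq (by positivity)]]
        exact Real.sqrt_le_sqrt (by linarith [hx.2])
      have hd2 : dist (σ x) (σ t) < ε / 2 := by
        have : CE * Real.sqrt (x - t) ≤ CE * (ε / (2 * (CE + 1))) :=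
          mul_le_mul_of_nonneg_left hsq hCE0
        have hlt : CE * (ε / (2 * (CE + 1))) < ε / 2 := by
          rw [show CE * (ε / (2 * (CE + 1))) = CE * ε / (2 * (CE + 1)) by ring,
            div_lt_div_iff₀ (by positivity) (by norm_num)]
          nlinarith
        linarith
      have := ht w hw
      have htri := dist_triangle (σ t) (σ x) w
      rw [dist_comm (σ t) (σ x)] at htri
      linarith
    exact not_freq_atTop (hUclosed (ε / 2)).measurableSet (hUfin (ε / 2) (by linarith))
      hηpos hfreq2
  -- separation of wells
  obtain ⟨ε₀, hε₀, hsep⟩ : ∃ ε₀ : ℝ, 0 < ε₀ ∧ ∀ w w', W w = 0 → W w' = 0 → w ≠ w' →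
      3 * ε₀ ≤ dist w w' := by
    set F := hH1.toFinset with hF
    by_cases hpairs : F.offDiag.Nonempty
    · set m := F.offDiag.inf' hpairs (fun p => dist p.1 p.2) with hm
      have hmpos : 0 < m := by
        rw [hm, Finset.lt_inf'_iff]
        rintro ⟨w, w'⟩ hp
        rw [Finset.mem_offDiag] at hp
        exact dist_pos.mpr hp.2.2
      refine ⟨m / 3, by linarith, fun w w' hw hw' hne => ?_⟩
      have hmem : (w, w') ∈ F.offDiag := by
        rw [Finset.mem_offDiag]
        exact ⟨hH1.mem_toFinset.mpr hw, hH1.mem_toFinset.mpr hw', hne⟩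
      have := Finset.inf'_le (fun p : _ × _ => dist p.1 p.2) hmem
      calc 3 * (m / 3) = m := by ring
        _ ≤ dist w w' := le_trans (le_refl _) this
    · refine ⟨1, one_pos, fun w w' hw hw' hne => absurd ?_ hpairs⟩
      exact ⟨(w, w'), Finset.mem_offDiag.mpr
        ⟨hH1.mem_toFinset.mpr hw, hH1.mem_toFinset.mpr hw', hne⟩⟩
  -- pinning to a single well at each scale
  have hpin : ∀ ε : ℝ, 0 < ε → ε ≤ ε₀ → ∃ w, W w = 0 ∧ ∀ᶠ t in atTop, dist (σ t) w < ε := by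
    intro ε hε hεε₀
    obtain ⟨T, hT⟩ := eventually_atTop.mp (hnear ε hε)
    obtain ⟨w₀, hw₀, hw₀T⟩ := hT T le_rfl
    refine ⟨w₀, hw₀, eventually_atTop.mpr ⟨T, fun t ht => ?_⟩⟩
    have hmain : Ici T ⊆ {t | dist (σ t) w₀ < ε} := by
      refine IsPreconnected.subset_left_of_subset_union
        (s := Ici T) (u := {t | dist (σ t) w₀ < ε}) (v := {t | ε < dist (σ t) w₀})
        (isOpen_lt (hσ.dist continuous_const) continuous_const)
        (isOpen_lt continuous_const (hσ.dist continuous_const))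
        ?_ ?_ ?_ isPreconnected_Ici
      · rw [Set.disjoint_iff]
        rintro x ⟨h1, h2⟩
        have h1' : dist (σ x) w₀ < ε := h1
        have h2' : ε < dist (σ x) w₀ := h2
        linarith
      · intro x hx
        obtain ⟨w, hw, hwd⟩ := hT x hx
        by_cases hww : w = w₀
        · exact Or.inl (hww ▸ hwd)
        · refine Or.inr ?_
          have hsep' := hsep w w₀ hw hw₀ hww
          have htri := dist_triangle (σ x) w w₀
          have : dist (σ x) w₀ ≥ dist w w₀ - dist (σ x) w := by
            have := dist_triangle w (σ x) w₀
            rw [dist_comm w (σ x)] at this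
            linarith
          show ε < dist (σ x) w₀
          linarith
      · exact ⟨T, Set.mem_Ici.mpr le_rfl, hw₀T⟩
    exact hmain ht
  -- conclusion
  obtain ⟨u, hu0, hu⟩ := hpin ε₀ hε₀ le_rfl
  refine ⟨u, hu0, ?_⟩
  rw [Metric.tendsto_nhds]
  intro ε hε
  obtain ⟨w, hw0, hw⟩ := hpin (min ε ε₀) (lt_min hε hε₀) (min_le_right _ _)
  have hwu : w = u := by
    by_contra hne
    obtain ⟨t, htu, htw⟩ := (hu.and hw).exists
    have h1 := hsep w u hw0 hu0 hne
    have htri := dist_triangle w (σ t) u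
    rw [dist_comm w (σ t)] at htri
    have : dist (σ t) w < ε₀ := lt_of_lt_of_le htw (min_le_right _ _)
    linarith
  rw [hwu] at hw
  exact hw.mono fun t ht => lt_of_lt_of_le ht (min_le_left _ _)

end scratch

/-- For lower semicontinuous `W : ℝ^N → [0,∞]` satisfying (H1) and (H2),
every finite-energy map `σ ∈ H¹_loc(ℝ, ℝ^N)` (given by its continuous representative,
with a.e. derivative `g` in the sense of the fundamental theorem of calculus) with
`∫_ℝ (|σ'|² + W(σ)) < ∞` has limits `u⁻, u⁺` at `∓∞, ±∞` which are wells of `W`. -/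
theorem finite_energy_limits {N : ℕ} (W : EuclideanSpace ℝ (Fin N) → ℝ≥0∞)
    (hlsc : LowerSemicontinuous W)
    (hH1 : {z : EuclideanSpace ℝ (Fin N) | W z = 0}.Finite)
    (hH2 : ∃ c : ℝ≥0∞, 0 < c ∧ ∃ R : ℝ, ∀ z : EuclideanSpace ℝ (Fin N), R ≤ ‖z‖ → c ≤ W z)
    (σ g : ℝ → EuclideanSpace ℝ (Fin N)) (hσ : Continuous σ) (hg : Measurable g)
    (hFTC : ∀ s t : ℝ, σ t - σ s = ∫ r in s..t, g r)
    (hE : (∫⁻ t : ℝ, ((‖g t‖₊ : ℝ≥0∞) ^ 2 + W (σ t))) < ⊤) :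
    ∃ um up : EuclideanSpace ℝ (Fin N), W um = 0 ∧ W up = 0 ∧
      Tendsto σ atBot (nhds um) ∧ Tendsto σ atTop (nhds up) := by
  obtain ⟨up, hup0, hup⟩ := aux_atTop W hlsc hH1 hH2 σ g hσ hg hFTC hE
  -- reflected data
  set σ' : ℝ → EuclideanSpace ℝ (Fin N) := fun t => σ (-t) with hσ'def
  set g' : ℝ → EuclideanSpace ℝ (Fin N) := fun t => -g (-t) with hg'def
  have hσ' : Continuous σ' := hσ.comp continuous_neg
  have hg' : Measurable g' := (hg.comp measurable_neg).neg
  have hFTC' : ∀ s t : ℝ, σ' t - σ' s = ∫ r in s..t, g' r := by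
    intro s t
    have h1 : σ' t - σ' s = ∫ r in (-s)..(-t), g r := hFTC (-s) (-t)
    rw [h1]
    have h2 : (∫ r in s..t, g' r) = -∫ r in s..t, g (-r) := by
      simp [hg'def, intervalIntegral.integral_neg]
    rw [h2, intervalIntegral.integral_comp_neg g, intervalIntegral.integral_symm]
  have hE' : (∫⁻ t : ℝ, ((‖g' t‖₊ : ℝ≥0∞) ^ 2 + W (σ' t))) < ⊤ := by
    have hmp := Measure.measurePreserving_neg (volume : Measure ℝ)
    have hmeas : Measurable fun t : ℝ => ((‖g t‖₊ : ℝ≥0∞) ^ 2 + W (σ t)) :=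
      (hg.nnnorm.coe_nnreal_ennreal.pow_const 2).add (hlsc.measurable.comp hσ.measurable)
    have : (∫⁻ t : ℝ, ((‖g' t‖₊ : ℝ≥0∞) ^ 2 + W (σ' t)))
        = ∫⁻ t : ℝ, ((‖g t‖₊ : ℝ≥0∞) ^ 2 + W (σ t)) := by
      rw [← hmp.lintegral_comp hmeas]
      simp [hg'def, hσ'def]
    rwa [this]
  obtain ⟨um, hum0, hum⟩ := aux_atTop W hlsc hH1 hH2 σ' g' hσ' hg' hFTC' hE'
  refine ⟨um, up, hum0, hup0, ?_, hup⟩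
  have : Tendsto (fun t : ℝ => -t) atBot atTop := tendsto_neg_atBot_atTop
  have := hum.comp this
  have heq : (σ' ∘ fun t : ℝ => -t) = σ := by
    funext t; simp [hσ'def]
  rwa [heq] at this
end

section
/- Let H be a Hilbert space, Σ ⊂ H nonempty, e : H → [0,∞] with zero set exactly Σ, and suppose for each ε > 0 that k_ε := inf{e(v) : dist(v,Σ) ≥ ε} > 0. Let σ : [0,∞) → H be continuous with ∫_0^∞ (‖σ'(t)‖² + e(σ(t))) dt < ∞ (σ ∈ H¹_loc with square-integrable derivative). Assume Σ is such that points of Σ are pairwise at distance ≥ 2ε₀ for some ε₀ > 0, and there exists a sequence t_n → ∞ with σ(t_n) → u⁺ for some u⁺ ∈ Σ. Then σ(t) → u⁺ in H as t → ∞. -/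
open MeasureTheory Metric Set Filter Topology
open scoped ENNReal NNReal

private lemma tail_lintegral_small (F : ℝ → ℝ≥0∞)
    (hF : (∫⁻ t in Set.Ici (0:ℝ), F t) < ⊤) {η : ℝ≥0∞} (hη : 0 < η) :
    ∃ T : ℝ, 0 ≤ T ∧ (∫⁻ t in Set.Ici T, F t) < η := by
  set c : ℕ → ℝ≥0∞ := fun n => ∫⁻ t in Set.Ico (n : ℝ) ((n : ℝ) + 1), F t with hc
  have hdisj : Pairwise (Function.onFun Disjoint fun n : ℕ => Set.Ico (n : ℝ) ((n : ℝ) + 1)) := by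
    intro m n hmn
    rcases Ne.lt_or_gt hmn with h | h
    · exact Set.Ico_disjoint_Ico.mpr
        (le_trans inf_le_left (le_trans (by exact_mod_cast Nat.succ_le_of_lt h) le_sup_right))
    · exact Set.Ico_disjoint_Ico.mpr
        (le_trans inf_le_right (le_trans (by exact_mod_cast Nat.succ_le_of_lt h) le_sup_left))
  have hunion : Set.Ici (0:ℝ) = ⋃ n : ℕ, Set.Ico (n:ℝ) ((n:ℝ)+1) := by
    ext x
    simp only [Set.mem_Ici, Set.mem_iUnion, Set.mem_Ico]
    constructor
    · intro hx
      exact ⟨⌊x⌋₊, Nat.floor_le hx, Nat.lt_floor_add_one x⟩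
    · rintro ⟨n, h1, _⟩
      exact le_trans (Nat.cast_nonneg n) h1
  have hsum : ∑' n, c n ≠ ⊤ := by
    rw [hc, ← MeasureTheory.lintegral_iUnion (fun n => measurableSet_Ico) hdisj F, ← hunion]
    exact hF.ne
  have htail := ENNReal.tendsto_sum_nat_add c hsum
  have hev : ∀ᶠ i in atTop, ∑' k, c (k + i) < η := htail (Iio_mem_nhds hη)
  obtain ⟨n, hn⟩ := hev.exists
  refine ⟨(n : ℝ), Nat.cast_nonneg n, lt_of_le_of_lt ?_ hn⟩
  calc ∫⁻ t in Set.Ici (n:ℝ), F t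
      ≤ ∫⁻ t in ⋃ k : ℕ, Set.Ico ((k + n : ℕ) : ℝ) (((k + n : ℕ) : ℝ) + 1), F t := by
        apply MeasureTheory.lintegral_mono_set
        intro x hx
        have hx' : (n:ℝ) ≤ x := hx
        have h0 : (0:ℝ) ≤ x := le_trans (Nat.cast_nonneg n) hx'
        have hfl : n ≤ ⌊x⌋₊ := Nat.le_floor hx'
        refine Set.mem_iUnion.mpr ⟨⌊x⌋₊ - n, ?_⟩
        have heq : (⌊x⌋₊ - n) + n = ⌊x⌋₊ := Nat.sub_add_cancel hfl
        rw [heq]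
        exact ⟨Nat.floor_le h0, Nat.lt_floor_add_one x⟩
    _ ≤ ∑' k : ℕ, c (k + n) :=
        MeasureTheory.lintegral_iUnion_le _ F

/-- **abstract annulus-crossing lemma.** Let `H` be a Hilbert space,
`Σ ⊂ H` nonempty with pairwise distances `≥ 2ε₀ > 0`, and `e : H → [0,∞]` with zero set
exactly `Σ` and `inf {e(v) : dist(v,Σ) ≥ ε} > 0` for all `ε > 0`. If `σ : [0,∞) → H` is
continuous, with derivative `g` (in the FTC sense) satisfying
`∫_0^∞ (‖σ'‖² + e(σ)) < ∞`, and `σ(t_n) → u⁺ ∈ Σ` along some `t_n → ∞`, then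
`σ(t) → u⁺` as `t → ∞`. -/
theorem abstract_convergence {H : Type*} [NormedAddCommGroup H] [InnerProductSpace ℝ H]
    [CompleteSpace H]
    (S : Set H) (hne : S.Nonempty)
    (ε₀ : ℝ) (hε₀ : 0 < ε₀) (hsep : ∀ p ∈ S, ∀ q ∈ S, p ≠ q → 2 * ε₀ ≤ dist p q)
    (e : H → ℝ≥0∞) (hzero : {v : H | e v = 0} = S)
    (hk : ∀ ε : ℝ, 0 < ε → ∃ k : ℝ≥0∞, 0 < k ∧ ∀ v : H, ε ≤ Metric.infDist v S → k ≤ e v)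
    (σ g : ℝ → H) (hσ : ContinuousOn σ (Set.Ici 0)) (hg : AEStronglyMeasurable g (volume.restrict (Set.Ici 0)))
    (hFTC : ∀ s ∈ Set.Ici (0:ℝ), ∀ t ∈ Set.Ici (0:ℝ), σ t - σ s = ∫ r in s..t, g r)
    (hE : (∫⁻ t in Set.Ici (0:ℝ), ((‖g t‖₊ : ℝ≥0∞) ^ 2 + e (σ t))) < ⊤)
    (tn : ℕ → ℝ) (htn : Tendsto tn atTop atTop)
    (uplus : H) (hup : uplus ∈ S)
    (hconv : Tendsto (fun n => σ (tn n)) atTop (nhds uplus)) :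
    Tendsto σ atTop (nhds uplus) := by
  by_contra hcon
  rw [Metric.tendsto_atTop] at hcon
  push_neg at hcon
  obtain ⟨ε, hε, hfreq⟩ := hcon
  set δ := min ε ε₀ with hδdef
  have hδ : 0 < δ := lt_min hε hε₀
  have hδε₀ : δ ≤ ε₀ := min_le_right _ _
  have hδε : δ ≤ ε := min_le_left _ _
  obtain ⟨k, hk0, hkle⟩ := hk (δ/2) (by positivity)
  set k' : ℝ≥0∞ := min k 1 with hk'def
  have hk'0 : 0 < k' := lt_min hk0 zero_lt_one
  have hk'top : k' ≠ ⊤ := ((min_le_right k 1).trans_lt (by norm_num)).ne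
  have hk'le : ∀ v : H, δ/2 ≤ infDist v S → k' ≤ e v :=
    fun v hv => le_trans (min_le_left _ _) (hkle v hv)
  -- annulus bound
  have hann : ∀ v : H, δ/2 ≤ dist v uplus → dist v uplus ≤ δ → δ/2 ≤ infDist v S := by
    intro v h1 h2
    by_contra hlt
    push_neg at hlt
    obtain ⟨q, hq, hqlt⟩ := (infDist_lt_iff hne).mp hlt
    rcases eq_or_ne q uplus with rfl | hqne
    · exact absurd hqlt (not_lt.mpr h1)
    · have hsq : 2 * ε₀ ≤ dist q uplus := hsep q hq uplus hup hqne
      have h3 : dist q uplus ≤ dist v q + dist v uplus := by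
        rw [dist_comm v q]; exact dist_triangle q v uplus
      have hge : δ/2 ≤ dist v q := by linarith
      exact absurd hqlt (not_lt.mpr hge)
  have hfc : ContinuousOn (fun t => dist (σ t) uplus) (Set.Ici 0) :=
    (continuous_id.dist continuous_const).comp_continuousOn hσ
  -- crossing construction
  have key : ∀ T : ℝ, 0 ≤ T → ∃ a b : ℝ, T ≤ a ∧ a ≤ b ∧
      dist (σ a) uplus = δ/2 ∧ dist (σ b) uplus = δ ∧
      ∀ t ∈ Set.Icc a b, δ/2 ≤ dist (σ t) uplus ∧ dist (σ t) uplus ≤ δ := by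
    intro T hT
    set f : ℝ → ℝ := fun t => dist (σ t) uplus with hfdef
    have h1 : ∀ᶠ n in atTop, T ≤ tn n := htn.eventually_ge_atTop T
    have h2 : ∀ᶠ n in atTop, dist (σ (tn n)) uplus < δ/2 :=
      Metric.tendsto_nhds.mp hconv (δ/2) (by positivity)
    obtain ⟨n, hn1, hn2⟩ := (h1.and h2).exists
    set s := tn n with hs
    have hs0 : (0:ℝ) ≤ s := le_trans hT hn1
    have hfs : f s < δ/2 := hn2
    obtain ⟨τ, hτs, hτd⟩ := hfreq s
    have hfτ : δ ≤ f τ := le_trans hδε hτd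
    have hsτ : s ≤ τ := hτs
    have hfcs : ContinuousOn f (Set.Icc s τ) := hfc.mono (fun x hx => le_trans hs0 hx.1)
    -- upper crossing time
    set B := Set.Icc s τ ∩ f ⁻¹' {δ} with hB
    have hBc : IsClosed B := hfcs.preimage_isClosed_of_isClosed isClosed_Icc isClosed_singleton
    have hBne : B.Nonempty := by
      have hmem : δ ∈ Set.Icc (f s) (f τ) := ⟨le_of_lt (lt_of_lt_of_le hfs (by linarith)), hfτ⟩
      obtain ⟨t0, ht0, hft0⟩ := intermediate_value_Icc hsτ hfcs hmem
      exact ⟨t0, ht0, hft0⟩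
    have hBbdd : BddBelow B := ⟨s, fun t ht => ht.1.1⟩
    set b := sInf B with hbdef
    have hbB : b ∈ B := hBc.csInf_mem hBne hBbdd
    have hsb : s ≤ b := hbB.1.1
    have hbτ : b ≤ τ := hbB.1.2
    have hfb : f b = δ := hbB.2
    have hlt : ∀ t ∈ Set.Ico s b, f t < δ := by
      intro t ht
      by_contra hge
      push_neg at hge
      have hmem : δ ∈ Set.Icc (f s) (f t) := ⟨by linarith, hge⟩
      have htτ : t ≤ τ := le_trans ht.2.le hbτ
      have hsub : Set.Icc s t ⊆ Set.Icc s τ := Set.Icc_subset_Icc le_rfl htτ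
      obtain ⟨t', ht', hft'⟩ := intermediate_value_Icc ht.1 (hfcs.mono hsub) hmem
      have hble : b ≤ t' := csInf_le hBbdd ⟨⟨ht'.1, le_trans ht'.2 htτ⟩, hft'⟩
      have := ht.2
      have := ht'.2
      linarith
    -- lower crossing time
    set A := Set.Icc s b ∩ f ⁻¹' {δ/2} with hA
    have hfcb : ContinuousOn f (Set.Icc s b) := hfcs.mono (Set.Icc_subset_Icc le_rfl hbτ)
    have hAc : IsClosed A := hfcb.preimage_isClosed_of_isClosed isClosed_Icc isClosed_singleton
    have hAne : A.Nonempty := by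
      have hmem : δ/2 ∈ Set.Icc (f s) (f b) := ⟨hfs.le, by rw [hfb]; linarith⟩
      obtain ⟨t0, ht0, hft0⟩ := intermediate_value_Icc hsb hfcb hmem
      exact ⟨t0, ht0, hft0⟩
    have hAbdd : BddAbove A := ⟨b, fun t ht => ht.1.2⟩
    set a := sSup A with hadef
    have haA : a ∈ A := hAc.csSup_mem hAne hAbdd
    have hsa : s ≤ a := haA.1.1
    have hab : a ≤ b := haA.1.2
    have hfa : f a = δ/2 := haA.2
    have hgt : ∀ t ∈ Set.Ioc a b, δ/2 < f t := by
      intro t ht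
      by_contra hle
      push_neg at hle
      have hmem : δ/2 ∈ Set.Icc (f t) (f b) := ⟨hle, by rw [hfb]; linarith⟩
      have hst : s ≤ t := le_trans hsa ht.1.le
      have hsub : Set.Icc t b ⊆ Set.Icc s b := Set.Icc_subset_Icc hst le_rfl
      obtain ⟨t', ht', hft'⟩ := intermediate_value_Icc ht.2 (hfcb.mono hsub) hmem
      have hle' : t' ≤ a := le_csSup hAbdd ⟨⟨le_trans hst ht'.1, ht'.2⟩, hft'⟩
      have := ht'.1
      have := ht.1
      linarith
    refine ⟨a, b, le_trans hn1 hsa, hab, hfa, hfb, fun t ht => ⟨?_, ?_⟩⟩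
    · rcases eq_or_lt_of_le ht.1 with heq | hlt'
      · rw [← heq]; exact hfa.ge
      · exact (hgt t ⟨hlt', ht.2⟩).le
    · rcases eq_or_lt_of_le ht.2 with heq | hlt'
      · rw [heq]; exact hfb.le
      · exact (hlt t ⟨le_trans hsa ht.1, hlt'⟩).le
  -- choose small tail
  set F : ℝ → ℝ≥0∞ := fun t => (‖g t‖₊ : ℝ≥0∞) ^ 2 + e (σ t) with hFdef
  set d : ℝ≥0∞ := ENNReal.ofReal (δ/2) with hd
  have hd0 : 0 < d := ENNReal.ofReal_pos.mpr (by positivity)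
  have hdtop : d ≠ ⊤ := ENNReal.ofReal_ne_top
  have hkd0 : 0 < k' * d^2 := ENNReal.mul_pos hk'0.ne' (pow_ne_zero 2 hd0.ne')
  have hkdtop : k' * d^2 ≠ ⊤ := ENNReal.mul_ne_top hk'top (ENNReal.pow_ne_top hdtop)
  set η : ℝ≥0∞ := min 1 (k' * d^2) / 2 with hηdef
  have hη0 : 0 < η := ENNReal.div_pos (lt_min one_pos hkd0).ne' (by norm_num)
  have hη1 : η ≤ 1 := le_trans (ENNReal.div_le_div_right (min_le_left _ _) 2)
    (by norm_num [ENNReal.div_le_iff_le_mul])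
  have hηkd : η ≤ (k' * d^2)/2 := ENNReal.div_le_div_right (min_le_right _ _) _
  have hη2 : η * η < k' * d^2 := by
    calc η * η ≤ ((k' * d^2)/2) * 1 := mul_le_mul' hηkd hη1
    _ = (k' * d^2)/2 := mul_one _
    _ < k' * d^2 := ENNReal.half_lt_self hkd0.ne' hkdtop
  obtain ⟨T, hT0, hTtail⟩ := tail_lintegral_small F hE hη0
  obtain ⟨a, b, hTa, hab, hfa, hfb, hbetween⟩ := key T hT0
  have ha0 : (0:ℝ) ≤ a := hT0.trans hTa
  have hb0 : (0:ℝ) ≤ b := ha0.trans hab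
  have hIocT : Set.Ioc a b ⊆ Set.Ici T := fun t ht => hTa.trans ht.1.le
  set M : ℝ≥0∞ := ENNReal.ofReal (b - a) with hM
  -- lower bound on e forces short time
  have hEbound : k' * M ≤ η := by
    have h1 : ∀ t ∈ Set.Ioc a b, k' ≤ e (σ t) := by
      intro t ht
      have ht' := hbetween t ⟨ht.1.le, ht.2⟩
      exact hk'le _ (hann _ ht'.1 ht'.2)
    calc k' * M = ∫⁻ _ in Set.Ioc a b, k' := by
          rw [MeasureTheory.setLIntegral_const, Real.volume_Ioc]
      _ ≤ ∫⁻ t in Set.Ioc a b, e (σ t) :=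
          lintegral_mono_ae ((ae_restrict_iff' measurableSet_Ioc).mpr (ae_of_all _ h1))
      _ ≤ ∫⁻ t in Set.Ioc a b, F t :=
          lintegral_mono_ae (ae_of_all _ (fun t => le_add_self))
      _ ≤ ∫⁻ t in Set.Ici T, F t := lintegral_mono_set hIocT
      _ ≤ η := hTtail.le
  have hAbound : (∫⁻ t in Set.Ioc a b, (‖g t‖₊ : ℝ≥0∞)^2) ≤ η := by
    calc (∫⁻ t in Set.Ioc a b, (‖g t‖₊ : ℝ≥0∞)^2)
        ≤ ∫⁻ t in Set.Ioc a b, F t :=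
          lintegral_mono_ae (ae_of_all _ (fun t => self_le_add_right _ _))
      _ ≤ ∫⁻ t in Set.Ici T, F t := lintegral_mono_set hIocT
      _ ≤ η := hTtail.le
  -- displacement bound
  have hdisp : δ/2 ≤ (∫⁻ t in Set.Ioc a b, ENNReal.ofReal ‖g t‖).toReal := by
    have hσab : σ b - σ a = ∫ r in a..b, g r := hFTC a ha0 b hb0
    have htri : dist (σ b) uplus ≤ dist (σ b) (σ a) + dist (σ a) uplus := dist_triangle _ _ _
    have h1 : δ/2 ≤ ‖σ b - σ a‖ := by
      rw [← dist_eq_norm]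
      rw [hfa, hfb] at htri
      linarith
    rw [hσab, intervalIntegral.integral_of_le hab] at h1
    exact le_trans h1 (MeasureTheory.norm_integral_le_lintegral_norm g)
  -- Cauchy–Schwarz
  have hcs : d^2 ≤ (∫⁻ t in Set.Ioc a b, (‖g t‖₊ : ℝ≥0∞)^2) * M := by
    set Bq := ∫⁻ t in Set.Ioc a b, ENNReal.ofReal ‖g t‖ with hBq
    have hdB : d ≤ Bq := ENNReal.ofReal_le_of_le_toReal hdisp
    have hmle : volume.restrict (Set.Ioc a b) ≤ volume.restrict (Set.Ici (0:ℝ)) :=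
      Measure.restrict_mono (fun t ht => le_trans ha0 ht.1.le) le_rfl
    have hgm : AEMeasurable (fun t => ENNReal.ofReal ‖g t‖) (volume.restrict (Set.Ioc a b)) :=
      ((hg.mono_measure hmle).norm.aemeasurable).ennreal_ofReal
    have hpq : Real.HolderConjugate 2 2 := Real.holderConjugate_iff.mpr ⟨one_lt_two, by norm_num⟩
    have hholder := ENNReal.lintegral_mul_le_Lp_mul_Lq (volume.restrict (Set.Ioc a b)) hpq hgm
      (aemeasurable_const (b := (1:ℝ≥0∞)))
    simp only [mul_one, Pi.mul_apply, ENNReal.one_rpow, lintegral_const, one_mul,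
      Measure.restrict_apply_univ] at hholder
    have hXeq : (∫⁻ t in Set.Ioc a b, (ENNReal.ofReal ‖g t‖) ^ (2:ℝ))
        = ∫⁻ t in Set.Ioc a b, (‖g t‖₊ : ℝ≥0∞)^2 := by
      refine lintegral_congr (fun t => ?_)
      rw [ofReal_norm, enorm_eq_nnnorm, show (2:ℝ) = ((2:ℕ):ℝ) by norm_num, ENNReal.rpow_natCast]
    rw [hXeq, Real.volume_Ioc, ← hM] at hholder
    have hd2 : d^2 ≤ ((∫⁻ t in Set.Ioc a b, (‖g t‖₊ : ℝ≥0∞)^2) ^ (1/(2:ℝ)) * M ^ (1/(2:ℝ)))^2 :=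
      pow_le_pow_left₀ zero_le (le_trans hdB hholder) 2
    calc d^2 ≤ ((∫⁻ t in Set.Ioc a b, (‖g t‖₊ : ℝ≥0∞)^2) ^ (1/(2:ℝ)))^2 * (M ^ (1/(2:ℝ)))^2 := by
          rw [← mul_pow]; exact hd2
      _ = (∫⁻ t in Set.Ioc a b, (‖g t‖₊ : ℝ≥0∞)^2) * M := by
          rw [← ENNReal.rpow_natCast ((∫⁻ t in Set.Ioc a b, (‖g t‖₊ : ℝ≥0∞)^2) ^ (1/(2:ℝ))) 2,
            ← ENNReal.rpow_natCast (M ^ (1/(2:ℝ))) 2, ← ENNReal.rpow_mul, ← ENNReal.rpow_mul]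
          norm_num
  -- contradiction
  have hM' : M ≤ η / k' :=
    (ENNReal.le_div_iff_mul_le (Or.inl hk'0.ne') (Or.inl hk'top)).mpr
      (by rwa [mul_comm] at hEbound)
  have hfinal : d^2 ≤ η * (η / k') := le_trans hcs (mul_le_mul' hAbound hM')
  have hlt : η * (η / k') < d^2 := by
    rw [mul_div_assoc']
    rw [ENNReal.div_lt_iff (Or.inl hk'0.ne') (Or.inl hk'top)]
    calc η * η < k' * d^2 := hη2
      _ = d^2 * k' := mul_comm _ _
  exact absurd hfinal (not_le.mpr hlt)
end
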